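/- arXiv:math/0408144 — 6 statements merged into one kernel-verified Lean document; each statement's English description precedes it below -/
import Mathlib

section
/- Kraft–Chaitin Theorem: Let Q ≥ 2 and let n : ℕ → ℕ be a computable sequence of non-negative integers such that ∑_{i≥1} Q^{-n_i} ≤ 1. Then one can effectively construct a computable sequence of strings w_1, w_2, … over the alphabet X_Q such that |w_i|_Q = n_i for every i ≥ 1 and the sequence is prefix-free, i.e., for all i ≠ j the string w_i is not a prefix of w_j (in particular the w_i are pairwise distinct). -/
open scoped ENNReal

/-- Strings over a `Q`-letter alphabet `X_Q`. -/
abbrev Str (Q : ℕ) : Type := List (Fin Q)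

/-- A set of strings is prefix-free if no element is a proper prefix of another. -/
def PrefixFreeSet {Q : ℕ} (S : Set (Str Q)) : Prop :=
  ∀ x ∈ S, ∀ y ∈ S, x <+: y → x = y

/-- A self-delimiting machine: a partial computable function on `X_Q`-strings
whose domain (program set) is prefix-free. -/
structure SDMachine (Q : ℕ) where
  f : Str Q →. Str Q
  partrec : Partrec f
  prefixFree : PrefixFreeSet f.Dom

/-- Program-size complexity `H_T(x) = min {|y| : T(y) = x}`, with `min ∅ = ∞`. -/
noncomputable def Hm {Q : ℕ} (T : SDMachine Q) (x : Str Q) : ℕ∞ :=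
  sInf ((fun y : Str Q => (y.length : ℕ∞)) '' {y | x ∈ T.f y})

/-- `U` is a universal self-delimiting machine: for every self-delimiting machine `T`
there is a constant `ε > 0` with `H_U(x) ≤ H_T(x) + ε` for all `x`. -/
def IsUniversal {Q : ℕ} (U : SDMachine Q) : Prop :=
  ∀ T : SDMachine Q, ∃ ε : ℕ, 0 < ε ∧ ∀ x, Hm U x ≤ Hm T x + (ε : ℕ∞)

/-- δ-complexity `δ(x) = H(x) − |x|`.  (For a universal machine `U`, `Hm U x` is
always finite, so taking `toNat` is harmless.) -/
noncomputable def deltaC {Q : ℕ} (U : SDMachine Q) (x : Str Q) : ℤ :=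
  ((Hm U x).toNat : ℤ) - (x.length : ℤ)

/-- A set is computably enumerable if it is the domain of a partial computable function. -/
def CEset {α : Type} [Primcodable α] (S : Set α) : Prop :=
  ∃ f : α →. Unit, Partrec f ∧ f.Dom = S

/-- An immune set: infinite, but containing no infinite c.e. subset. -/
def Immune {α : Type} [Primcodable α] (S : Set α) : Prop :=
  S.Infinite ∧ ∀ A : Set α, A ⊆ S → CEset A → A.Finite

namespace KC
set_option linter.unusedSectionVars false
variable (Q : ℕ) [NeZero Q]
abbrev StrQ (Q : ℕ) := List (Fin Q)
def dig (t : ℕ) : Fin Q := Fin.ofNat Q t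
def sibs (z : StrQ Q) : List (StrQ Q) :=
  (List.range (Q - 1)).map fun t => z ++ [dig Q (t + 1)]
def piecesAux : ℕ → StrQ Q → List (StrQ Q)
  | 0, _ => []
  | d + 1, z => piecesAux d (z ++ [dig Q 0]) ++ sibs Q z

theorem replicate_primrec {α : Type} [Primcodable α] :
    Primrec₂ (fun (k : ℕ) (a : α) => List.replicate k a) := by
  have : Primrec₂ (fun (k : ℕ) (a : α) => (List.range k).map (fun _ => a)) :=
    Primrec.list_map (Primrec.list_range.comp .fst) ((Primrec.snd.comp .fst).to₂) |>.to₂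
  exact this.to₂.of_eq fun k a => by
    simp [List.map_const']

theorem piecesAux_eq (d : ℕ) (z : StrQ Q) :
    piecesAux Q d z =
      (List.range d).flatMap (fun i => sibs Q (z ++ List.replicate (d - 1 - i) (dig Q 0))) := by
  induction d generalizing z with
  | zero => simp [piecesAux]
  | succ d ih =>
    rw [piecesAux, ih, List.range_succ, List.flatMap_append]
    simp only [List.flatMap_cons, List.flatMap_nil, List.append_nil]
    congr 1
    · unfold List.flatMap
      congr 1
      apply List.map_congr_left
      intro i hi
      rw [List.mem_range] at hi
      congr 1
      rw [List.append_assoc]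
      congr 1
      have : d + 1 - 1 - i = (d - 1 - i) + 1 := by omega
      rw [this, List.replicate_succ]
      rfl
    · simp

section PR
variable {α : Type} {β : Type} [Primcodable α] [Primcodable β]

theorem list_takeWhile_primrec {p : α → β → Bool} {f : α → List β}
    (hp : Primrec₂ p) (hf : Primrec f) :
    Primrec fun a => (f a).takeWhile (p a) := by
  have h : Primrec fun a => (f a).foldr (fun b acc => bif p a b then b :: acc else []) [] :=
    Primrec.list_foldr hf (.const []) <|
      (Primrec.cond (hp.comp .fst (Primrec.fst.comp .snd))
        (Primrec.list_cons.comp (Primrec.fst.comp .snd) (Primrec.snd.comp .snd))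
        (.const [])).to₂
  refine h.of_eq fun a => ?_
  induction f a with
  | nil => rfl
  | cons b l ih =>
    simp only [List.foldr_cons, ih, List.takeWhile_cons]
    cases p a b <;> simp

theorem list_dropWhile_primrec {p : α → β → Bool} {f : α → List β}
    (hp : Primrec₂ p) (hf : Primrec f) :
    Primrec fun a => (f a).dropWhile (p a) := by
  have h : Primrec fun a => ((f a).foldr
      (fun b acc => (bif p a b then acc.1 else b :: acc.2, b :: acc.2))
      (([] : List β), ([] : List β))).1 := by
    have hstep : Primrec₂ (fun (a : α) (q : β × (List β × List β)) =>
        ((bif p a q.1 then q.2.1 else q.1 :: q.2.2, q.1 :: q.2.2) : List β × List β)) := by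
      show Primrec fun q : α × (β × (List β × List β)) =>
        ((bif p q.1 q.2.1 then q.2.2.1 else q.2.1 :: q.2.2.2, q.2.1 :: q.2.2.2) :
          List β × List β)
      refine Primrec.pair ?_ ?_
      · exact Primrec.cond (hp.comp .fst (Primrec.fst.comp .snd))
          (Primrec.fst.comp (Primrec.snd.comp .snd))
          (Primrec.list_cons.comp (Primrec.fst.comp .snd)
            (Primrec.snd.comp (Primrec.snd.comp .snd)))
      · exact Primrec.list_cons.comp (Primrec.fst.comp .snd)
          (Primrec.snd.comp (Primrec.snd.comp .snd))
    exact Primrec.fst.comp (Primrec.list_foldr hf (.const ([], [])) hstep)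
  refine h.of_eq fun a => ?_
  suffices H : ((f a).foldr
      (fun b acc => (bif p a b then acc.1 else b :: acc.2, b :: acc.2))
      (([] : List β), ([] : List β))) = ((f a).dropWhile (p a), f a) by rw [H]
  induction f a with
  | nil => rfl
  | cons b l ih =>
    simp only [List.foldr_cons, ih, List.dropWhile_cons]
    cases p a b <;> simp

end PR

def pad (z : StrQ Q) (m : ℕ) : StrQ Q := z ++ List.replicate (m - z.length) (dig Q 0)

def step (R : List (StrQ Q)) (m : ℕ) : StrQ Q × List (StrQ Q) :=
  match R.dropWhile (fun z => decide (m < z.length)) with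
  | [] => (List.replicate m (dig Q 0), [])
  | z :: B =>
      (pad Q z m,
        R.takeWhile (fun z => decide (m < z.length)) ++ piecesAux Q (m - z.length) z ++ B)

def Rf (n : ℕ → ℕ) : ℕ → List (StrQ Q) :=
  fun k => Nat.rec [([] : StrQ Q)] (fun k ih => (step Q ih (n k)).2) k

def wf (n : ℕ → ℕ) (k : ℕ) : StrQ Q := (step Q (Rf Q n k) (n k)).1

theorem dig_primrec : Primrec (dig Q) := by
  rw [← Primrec.fin_val_iff]
  have : Primrec fun t : ℕ => t % Q := Primrec.nat_mod.comp .id (.const Q)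
  exact this.of_eq fun t => rfl

theorem sibs_primrec : Primrec (sibs Q) := by
  unfold sibs
  exact Primrec.list_map (Primrec.const _)
    (Primrec.list_append.comp .fst <|
      (Primrec.list_cons.comp ((dig_primrec Q).comp (Primrec.succ.comp .snd)) (.const [])))

theorem piecesAux_primrec : Primrec₂ (piecesAux Q) := by
  have h : Primrec fun p : ℕ × StrQ Q =>
      (List.range p.1).flatMap (fun i => sibs Q (p.2 ++ List.replicate (p.1 - 1 - i) (dig Q 0))) :=
    Primrec.list_flatMap (Primrec.list_range.comp .fst)
      (((sibs_primrec Q).comp (Primrec.list_append.comp (Primrec.snd.comp .fst)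
        (replicate_primrec.comp
          (Primrec.nat_sub.comp
            (Primrec.nat_sub.comp (Primrec.fst.comp .fst) (.const 1)) .snd)
          (.const (dig Q 0))))).to₂)
  exact h.to₂.of_eq fun d z => (piecesAux_eq Q d z).symm

theorem pad_primrec : Primrec₂ (pad Q) := by
  have h : Primrec fun p : StrQ Q × ℕ =>
      p.1 ++ List.replicate (p.2 - p.1.length) (dig Q 0) :=
    Primrec.list_append.comp .fst
      (replicate_primrec.comp (Primrec.nat_sub.comp .snd (Primrec.list_length.comp .fst))
        (.const (dig Q 0)))
  exact h.to₂

theorem step_primrec : Primrec₂ (step Q) := by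
  have hpred : Primrec₂ fun (a : List (StrQ Q) × ℕ) (z : StrQ Q) =>
      decide (a.2 < z.length) :=
    PrimrecPred.decide (Primrec.nat_lt.comp (Primrec.snd.comp .fst) (Primrec.list_length.comp .snd))
  have hdw : Primrec fun a : List (StrQ Q) × ℕ =>
      a.1.dropWhile (fun z => decide (a.2 < z.length)) :=
    list_dropWhile_primrec hpred .fst
  have htw : Primrec fun a : List (StrQ Q) × ℕ =>
      a.1.takeWhile (fun z => decide (a.2 < z.length)) :=
    list_takeWhile_primrec hpred .fst
  have hbase : Primrec fun a : List (StrQ Q) × ℕ =>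
      ((List.replicate a.2 (dig Q 0), ([] : List (StrQ Q))) : StrQ Q × List (StrQ Q)) :=
    Primrec.pair (replicate_primrec.comp .snd (.const (dig Q 0))) (.const [])
  have hh : Primrec fun q : (List (StrQ Q) × ℕ) × (StrQ Q × List (StrQ Q)) =>
      ((pad Q q.2.1 q.1.2,
        q.1.1.takeWhile (fun z => decide (q.1.2 < z.length))
          ++ piecesAux Q (q.1.2 - q.2.1.length) q.2.1 ++ q.2.2) : StrQ Q × List (StrQ Q)) := by
    refine Primrec.pair ?_ ?_
    · exact (pad_primrec Q).comp (Primrec.fst.comp .snd) (Primrec.snd.comp .fst)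
    · exact Primrec.list_append.comp
        (Primrec.list_append.comp (htw.comp .fst)
          ((piecesAux_primrec Q).comp
            (Primrec.nat_sub.comp (Primrec.snd.comp .fst)
              (Primrec.list_length.comp (Primrec.fst.comp .snd)))
            (Primrec.fst.comp .snd)))
        (Primrec.snd.comp .snd)
  have H : Primrec fun a : List (StrQ Q) × ℕ =>
      (List.casesOn (a.1.dropWhile (fun z => decide (a.2 < z.length)))
        ((List.replicate a.2 (dig Q 0), ([] : List (StrQ Q))))
        (fun z B => (pad Q z a.2,
          a.1.takeWhile (fun z => decide (a.2 < z.length))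
            ++ piecesAux Q (a.2 - z.length) z ++ B)) : StrQ Q × List (StrQ Q)) :=
    Primrec.list_casesOn hdw hbase hh.to₂
  exact H.to₂.of_eq fun R m => by
    unfold step
    cases R.dropWhile (fun z => decide (m < z.length)) <;> rfl

theorem Rf_computable (n : ℕ → ℕ) (hn : Computable n) : Computable (Rf Q n) := by
  have hh : Computable₂ fun (_ : ℕ) (p : ℕ × List (StrQ Q)) =>
      (step Q p.2 (n p.1)).2 :=
    (Computable.snd.comp <| ((step_primrec Q).to_comp).comp
      (Computable.snd.comp .snd) (hn.comp (Computable.fst.comp .snd))).to₂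
  exact (Computable.nat_rec Computable.id (.const [([] : StrQ Q)]) hh).of_eq fun k => rfl

theorem wf_computable (n : ℕ → ℕ) (hn : Computable n) : Computable (wf Q n) :=
  Computable.fst.comp <|
    ((step_primrec Q).to_comp).comp (Rf_computable Q n hn) hn

/-! ### Measure and prefix combinatorics -/

noncomputable def μ (l : List (StrQ Q)) : ℝ≥0∞ :=
  (l.map fun z => ((Q : ℝ≥0∞) ^ z.length)⁻¹).sum

def incomp (a b : StrQ Q) : Prop := ¬ a <+: b ∧ ¬ b <+: a

variable {Q}

omit [NeZero Q] in
theorem incomp_symm {a b : StrQ Q} (h : incomp Q a b) : incomp Q b a := ⟨h.2, h.1⟩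

omit [NeZero Q] in
theorem incomp_append {z a b : StrQ Q} : incomp Q (z ++ a) (z ++ b) ↔ incomp Q a b := by
  simp [incomp, List.prefix_append_right_inj]

omit [NeZero Q] in
theorem incomp_of_prefix {u z y : StrQ Q} (h : incomp Q u z) (hzy : z <+: y) : incomp Q u y := by
  refine ⟨fun hu => ?_, fun hy => h.2 (hzy.trans hy)⟩
  rcases List.prefix_or_prefix_of_prefix hu hzy with h1 | h1
  · exact h.1 h1
  · exact h.2 h1

variable (Q)

@[simp] theorem μ_nil : μ Q [] = 0 := rfl

@[simp] theorem μ_cons (z : StrQ Q) (l : List (StrQ Q)) :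
    μ Q (z :: l) = ((Q : ℝ≥0∞) ^ z.length)⁻¹ + μ Q l := rfl

@[simp] theorem μ_append (l₁ l₂ : List (StrQ Q)) : μ Q (l₁ ++ l₂) = μ Q l₁ + μ Q l₂ := by
  simp [μ]

variable {Q} (hQ : 2 ≤ Q)
include hQ

theorem qne0 : (Q : ℝ≥0∞) ≠ 0 := by
  simp; omega

theorem qnetop : (Q : ℝ≥0∞) ≠ ⊤ := by simp

theorem qpow_ne0 (t : ℕ) : (Q : ℝ≥0∞) ^ t ≠ 0 := pow_ne_zero t (qne0 hQ)

theorem qpow_netop (t : ℕ) : (Q : ℝ≥0∞) ^ t ≠ ⊤ := by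
  exact ENNReal.pow_ne_top (qnetop hQ)

theorem qinv_ne0 (t : ℕ) : ((Q : ℝ≥0∞) ^ t)⁻¹ ≠ 0 := by
  simp [qpow_netop hQ t]

theorem qinv_netop (t : ℕ) : ((Q : ℝ≥0∞) ^ t)⁻¹ ≠ ⊤ := by
  simp [qpow_ne0 hQ t]

theorem qinv_pos (t : ℕ) : 0 < ((Q : ℝ≥0∞) ^ t)⁻¹ :=
  pos_iff_ne_zero.mpr (qinv_ne0 hQ t)

theorem μ_ne_top (l : List (StrQ Q)) : μ Q l ≠ ⊤ := by
  induction l with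
  | nil => simp
  | cons z l ih => simp [ENNReal.add_ne_top, ih, qinv_netop hQ]

theorem key_arith (m : ℕ) :
    ((Q : ℝ≥0∞) ^ (m + 1))⁻¹ + (Q - 1 : ℕ) * ((Q : ℝ≥0∞) ^ (m + 1))⁻¹
      = ((Q : ℝ≥0∞) ^ m)⁻¹ := by
  have h1 : ((Q : ℝ≥0∞) ^ (m + 1))⁻¹ + (Q - 1 : ℕ) * ((Q : ℝ≥0∞) ^ (m + 1))⁻¹
      = (Q : ℝ≥0∞) * ((Q : ℝ≥0∞) ^ (m + 1))⁻¹ := by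
    rw [← one_add_mul]
    congr 1
    have : (1 : ℝ≥0∞) + (Q - 1 : ℕ) = ((1 + (Q - 1) : ℕ) : ℝ≥0∞) := by push_cast; ring
    rw [this]
    congr 1
    omega
  rw [h1, pow_succ, ENNReal.mul_inv (Or.inl (qpow_ne0 hQ m)) (Or.inl (qpow_netop hQ m)),
    mul_comm ((Q : ℝ≥0∞) ^ m)⁻¹ _, ← mul_assoc,
    ENNReal.mul_inv_cancel (qne0 hQ) (qnetop hQ), one_mul]

omit hQ in
theorem μ_sibs (z : StrQ Q) :
    μ Q (sibs Q z) = (Q - 1 : ℕ) * ((Q : ℝ≥0∞) ^ (z.length + 1))⁻¹ := by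
  unfold μ sibs
  rw [List.map_map]
  have : ((fun z : StrQ Q => ((Q : ℝ≥0∞) ^ z.length)⁻¹) ∘ fun t => z ++ [dig Q (t + 1)])
      = fun _ : ℕ => ((Q : ℝ≥0∞) ^ (z.length + 1))⁻¹ := by
    funext t; simp
  rw [this, List.map_const', List.sum_replicate, List.length_range, nsmul_eq_mul]

theorem μ_piecesAux (d : ℕ) (z : StrQ Q) :
    μ Q (piecesAux Q d z) + ((Q : ℝ≥0∞) ^ (z.length + d))⁻¹ = ((Q : ℝ≥0∞) ^ z.length)⁻¹ := by
  induction d generalizing z with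
  | zero => simp [piecesAux]
  | succ d ih =>
    rw [piecesAux, μ_append, μ_sibs]
    have hlen : (z ++ [dig Q 0]).length = z.length + 1 := by simp
    have h2 := ih (z ++ [dig Q 0])
    rw [hlen] at h2
    have he : z.length + (d + 1) = z.length + 1 + d := by omega
    rw [he, ← key_arith hQ z.length, ← h2]
    ring

omit hQ in
theorem sibs_len {z y : StrQ Q} (hy : y ∈ sibs Q z) : y.length = z.length + 1 := by
  rcases List.mem_map.mp hy with ⟨t, _, rfl⟩
  simp

omit hQ in
theorem pieces_len {d : ℕ} {z y : StrQ Q} (hy : y ∈ piecesAux Q d z) :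
    z.length < y.length ∧ y.length ≤ z.length + d := by
  induction d generalizing z with
  | zero => simp [piecesAux] at hy
  | succ d ih =>
    rw [piecesAux, List.mem_append] at hy
    rcases hy with hy | hy
    · have := ih hy
      simp only [List.length_append, List.length_cons, List.length_nil] at this
      omega
    · have := sibs_len hy
      omega

theorem μ_filter_piecesAux (d : ℕ) (z : StrQ Q) (t : ℕ) (h1 : z.length ≤ t)
    (h2 : t < z.length + d) :
    μ Q ((piecesAux Q d z).filter (fun y => decide (t < y.length)))
      + ((Q : ℝ≥0∞) ^ (z.length + d))⁻¹ = ((Q : ℝ≥0∞) ^ t)⁻¹ := by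
  induction d generalizing z with
  | zero => omega
  | succ d ih =>
    rw [piecesAux, List.filter_append]
    rcases eq_or_lt_of_le h1 with rfl | hlt
    · -- t = z.length : everything is kept
      have e1 : (piecesAux Q d (z ++ [dig Q 0])).filter
          (fun y => decide (z.length < y.length)) = piecesAux Q d (z ++ [dig Q 0]) := by
        apply List.filter_eq_self.mpr
        intro y hy
        have := (pieces_len hy).1
        simp only [List.length_append, List.length_cons, List.length_nil] at this
        simp; omega
      have e2 : (sibs Q z).filter (fun y => decide (z.length < y.length)) = sibs Q z := by
        apply List.filter_eq_self.mpr
        intro y hy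
        have := sibs_len hy
        simp; omega
      rw [e1, e2]
      have := μ_piecesAux hQ (d + 1) z
      rw [piecesAux] at this
      exact this
    · -- z.length < t : sibs are all dropped
      have e2 : (sibs Q z).filter (fun y => decide (t < y.length)) = [] := by
        apply List.filter_eq_nil_iff.mpr
        intro y hy
        have := sibs_len hy
        simp; omega
      rw [e2, List.append_nil]
      have := ih (z ++ [dig Q 0]) (by simpa using hlt) (by simp; omega)
      simp only [List.length_append, List.length_cons, List.length_nil] at this
      have he : z.length + 1 + d = z.length + (d + 1) := by omega
      rw [he] at this
      exact this

/-! ### Normal form for pieces and incomparability -/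

theorem dig_zero_val : (dig Q 0).val = 0 := by
  show 0 % Q = 0
  exact Nat.zero_mod Q

theorem dig_succ_ne {t : ℕ} (ht : t + 1 < Q) : dig Q (t + 1) ≠ dig Q 0 := by
  intro h
  have h1 : (dig Q (t + 1)).val = (t + 1) % Q := rfl
  rw [Nat.mod_eq_of_lt ht] at h1
  have := dig_zero_val hQ
  rw [h] at h1
  omega

omit hQ in
theorem mem_pieces_strong {d : ℕ} {z y : StrQ Q} (hy : y ∈ piecesAux Q d z) :
    ∃ i t, i < d ∧ t + 1 < Q ∧
      y = z ++ (List.replicate i (dig Q 0) ++ [dig Q (t + 1)]) := by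
  induction d generalizing z with
  | zero => simp [piecesAux] at hy
  | succ d ih =>
    rw [piecesAux, List.mem_append] at hy
    rcases hy with hy | hy
    · rcases ih hy with ⟨i, t, hi, ht, rfl⟩
      refine ⟨i + 1, t, by omega, ht, ?_⟩
      simp [List.replicate_succ]
    · rcases List.mem_map.mp hy with ⟨t, htm, rfl⟩
      rw [List.mem_range] at htm
      exact ⟨0, t, by omega, by omega, by simp⟩

omit hQ in
theorem not_prefix_of_getElem_ne {x y : StrQ Q} {i : ℕ} (hi : i < x.length)
    (hiy : i < y.length) (hne : x[i] ≠ y[i]) : ¬ x <+: y := fun h => hne (h.getElem hi)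

/-- the two residues are incomparable -/
theorem resid_incomp {i j : ℕ} {s t : Fin Q} (hs : s ≠ dig Q 0) (ht : t ≠ dig Q 0)
    (hne : i ≠ j ∨ s ≠ t) :
    incomp Q (List.replicate i (dig Q 0) ++ [s]) (List.replicate j (dig Q 0) ++ [t]) := by
  have key : ∀ i j : ℕ, ∀ s t : Fin Q, s ≠ dig Q 0 → i < j →
      ¬ (List.replicate i (dig Q 0) ++ [s] <+: List.replicate j (dig Q 0) ++ [t]) := by
    intro i j s t hs hij
    apply not_prefix_of_getElem_ne (i := i) (by simp) (by simp; omega)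
    have e1 : (List.replicate i (dig Q 0) ++ [s])[i]'(by simp) = s := by
      rw [List.getElem_append_right (by simp)]
      simp
    have e2 : (List.replicate j (dig Q 0) ++ [t])[i]'(by simp; omega) = dig Q 0 := by
      rw [List.getElem_append_left (by simp; omega)]
      simp
    rw [e1, e2]
    exact hs
  rcases Nat.lt_trichotomy i j with hij | rfl | hij
  · exact ⟨key i j s t hs hij, fun h => by
      have hlen : (List.replicate j (dig Q 0) ++ [t]).length
          ≤ (List.replicate i (dig Q 0) ++ [s]).length := h.length_le
      simp at hlen; omega⟩
  · have hst : s ≠ t := by tauto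
    have heq : ∀ u v : Fin Q,
        (List.replicate i (dig Q 0) ++ [u] <+: List.replicate i (dig Q 0) ++ [v]) → u = v := by
      intro u v h
      have h2 := h.eq_of_length (by simp)
      have h3 := List.append_inj_right h2 (by simp)
      simpa using h3
    exact ⟨fun h => hst (heq _ _ h), fun h => hst (heq _ _ h).symm⟩
  · exact ⟨fun h => by
      have hlen := h.length_le
      simp at hlen; omega, key j i t s ht hij⟩

/-- residue vs the all-zeros block -/
theorem resid_incomp_zeros {i d : ℕ} {s : Fin Q} (hs : s ≠ dig Q 0) (hid : i < d) :
    incomp Q (List.replicate i (dig Q 0) ++ [s]) (List.replicate d (dig Q 0)) := by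
  constructor
  · apply not_prefix_of_getElem_ne (i := i) (by simp) (by simp; omega)
    have e1 : (List.replicate i (dig Q 0) ++ [s])[i]'(by simp) = s := by
      rw [List.getElem_append_right (by simp)]
      simp
    rw [e1, List.getElem_replicate]
    exact hs
  · intro h
    have hlen := h.length_le
    simp at hlen
    have hd : d = i + 1 := by omega
    subst hd
    have := h.eq_of_length (by simp)
    rw [List.replicate_succ' (n := i) (a := dig Q 0)] at this
    have := List.append_inj_right this (by simp)
    simp at this
    exact hs this.symm

omit hQ in
theorem pieces_prefix {d : ℕ} {z y : StrQ Q} (hy : y ∈ piecesAux Q d z) : z <+: y := by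
  rcases mem_pieces_strong hy with ⟨i, t, hi, ht, rfl⟩
  exact List.prefix_append _ _

theorem pad_incomp_pieces {d : ℕ} {z y : StrQ Q} (hy : y ∈ piecesAux Q d z) :
    incomp Q (z ++ List.replicate d (dig Q 0)) y := by
  rcases mem_pieces_strong hy with ⟨i, t, hi, ht, rfl⟩
  exact incomp_append.mpr (incomp_symm (resid_incomp_zeros hQ (dig_succ_ne hQ ht) hi))

theorem pieces_pairwise (d : ℕ) (z : StrQ Q) : (piecesAux Q d z).Pairwise (incomp Q) := by
  induction d generalizing z with
  | zero => simp [piecesAux]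
  | succ d ih =>
    rw [piecesAux, List.pairwise_append]
    refine ⟨ih _, ?_, ?_⟩
    · unfold sibs
      rw [List.pairwise_map]
      refine List.pairwise_lt_range.imp_of_mem ?_
      intro a b ha hb hab
      rw [List.mem_range] at ha hb
      have h1 : z ++ [dig Q (a + 1)] = z ++ (List.replicate 0 (dig Q 0) ++ [dig Q (a + 1)]) := by
        simp
      have h2 : z ++ [dig Q (b + 1)] = z ++ (List.replicate 0 (dig Q 0) ++ [dig Q (b + 1)]) := by
        simp
      rw [h1, h2]
      refine incomp_append.mpr (resid_incomp hQ (dig_succ_ne hQ (by omega))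
        (dig_succ_ne hQ (by omega)) (Or.inr ?_))
      intro h
      have : (a + 1) % Q = (b + 1) % Q := congrArg Fin.val h
      rw [Nat.mod_eq_of_lt (by omega), Nat.mod_eq_of_lt (by omega)] at this
      omega
    · intro a ha b hb
      rcases mem_pieces_strong ha with ⟨i, t, hi, ht, rfl⟩
      rcases List.mem_map.mp hb with ⟨u, hu, rfl⟩
      rw [List.mem_range] at hu
      have h1 : (z ++ [dig Q 0]) ++ (List.replicate i (dig Q 0) ++ [dig Q (t + 1)])
          = z ++ (List.replicate (i + 1) (dig Q 0) ++ [dig Q (t + 1)]) := by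
        simp [List.replicate_succ]
      have h2 : z ++ [dig Q (u + 1)] = z ++ (List.replicate 0 (dig Q 0) ++ [dig Q (u + 1)]) := by
        simp
      rw [h1, h2]
      exact incomp_append.mpr (resid_incomp hQ (dig_succ_ne hQ ht)
        (dig_succ_ne hQ (by omega)) (Or.inl (by omega)))

omit hQ in
theorem pieces_sorted (d : ℕ) (z : StrQ Q) :
    (piecesAux Q d z).Pairwise (fun a b : StrQ Q => b.length ≤ a.length) := by
  induction d generalizing z with
  | zero => simp [piecesAux]
  | succ d ih =>
    rw [piecesAux, List.pairwise_append]
    refine ⟨ih _, ?_, ?_⟩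
    · unfold sibs
      rw [List.pairwise_map]
      refine List.pairwise_lt_range.imp_of_mem ?_
      intro a b _ _ _
      simp
    · intro a ha b hb
      have h1 := (pieces_len ha).1
      have h2 := sibs_len hb
      simp only [List.length_append, List.length_cons, List.length_nil] at h1
      omega

omit hQ in
theorem pad_prefix (z : StrQ Q) (m : ℕ) : z <+: pad Q z m := List.prefix_append _ _

omit hQ in
theorem pad_len {z : StrQ Q} {m : ℕ} (h : z.length ≤ m) : (pad Q z m).length = m := by
  simp [pad]; omega

/-! ### The invariant and the step lemma -/

def GoodState {Q : ℕ} (R : List (StrQ Q)) : Prop :=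
  R.Pairwise (fun a b : StrQ Q => b.length ≤ a.length) ∧
  R.Pairwise (incomp Q) ∧
  ∀ t : ℕ, μ Q (R.filter (fun z => decide (t < z.length))) < ((Q : ℝ≥0∞) ^ t)⁻¹

theorem step_spec {R : List (StrQ Q)} {nn : ℕ}
    (hGS : GoodState R) (hμ : ((Q : ℝ≥0∞) ^ nn)⁻¹ ≤ μ Q R) :
    (step Q R nn).1.length = nn ∧
    GoodState (step Q R nn).2 ∧
    μ Q (step Q R nn).2 + ((Q : ℝ≥0∞) ^ nn)⁻¹ = μ Q R ∧
    (∀ z' ∈ (step Q R nn).2, incomp Q (step Q R nn).1 z') ∧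
    (∀ u : StrQ Q, (∀ z ∈ R, incomp Q u z) →
      incomp Q u (step Q R nn).1 ∧ ∀ z' ∈ (step Q R nn).2, incomp Q u z') := by
  classical
  set p : StrQ Q → Bool := fun z => decide (nn < z.length) with hp
  -- the dropWhile part is nonempty
  have hdw : R.dropWhile p ≠ [] := by
    intro h
    rw [List.dropWhile_eq_nil_iff] at h
    have hfil : R.filter p = R := List.filter_eq_self.mpr h
    have := hGS.2.2 nn
    rw [hfil] at this
    exact absurd hμ (not_le.mpr this)
  obtain ⟨z, B, hzB⟩ : ∃ z B, R.dropWhile p = z :: B := by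
    cases h : R.dropWhile p with
    | nil => exact absurd h hdw
    | cons z B => exact ⟨z, B, rfl⟩
  set A := R.takeWhile p with hA
  have hRdec : A ++ z :: B = R := by
    rw [hA, ← hzB]
    exact List.takeWhile_append_dropWhile
  have hzlen : z.length ≤ nn := by
    have h0 := List.head_dropWhile_not p hdw
    have hsome : (R.dropWhile p).head? = some z := by rw [hzB]; rfl
    rw [List.head?_eq_head hdw] at hsome
    injection hsome with hsome
    rw [hsome, hp] at h0
    simpa using h0
  have hAmem : ∀ x ∈ A, nn < x.length := by
    intro x hx
    have := List.mem_takeWhile_imp hx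
    simpa [hp] using this
  -- the result of the step
  have hstep : step Q R nn = (pad Q z nn, A ++ piecesAux Q (nn - z.length) z ++ B) := by
    rw [step, hzB]
  set m := z.length with hm
  set P := piecesAux Q (nn - m) z with hP
  set v := pad Q z nn with hv
  -- facts from the old pairwise structures
  have hsorted := hGS.1
  have hinc := hGS.2.1
  rw [← hRdec, List.pairwise_append, List.pairwise_cons] at hsorted hinc
  obtain ⟨hsA, ⟨hszB, hsB⟩, hsAzB⟩ := hsorted
  obtain ⟨hiA, ⟨hizB, hiB⟩, hiAzB⟩ := hinc
  -- lengths
  have hPlen : ∀ y ∈ P, m < y.length ∧ y.length ≤ nn := by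
    intro y hy
    have := pieces_len (hP ▸ hy)
    omega
  have hvlen : v.length = nn := pad_len hzlen
  have hvz : z <+: v := pad_prefix z nn
  have hPz : ∀ y ∈ P, z <+: y := fun y hy => pieces_prefix (hP ▸ hy)
  have hvP : ∀ y ∈ P, incomp Q v y := by
    intro y hy
    have : v = z ++ List.replicate (nn - m) (dig Q 0) := rfl
    rw [this]
    exact pad_incomp_pieces hQ (hP ▸ hy)
  -- measure equation
  have hμP : μ Q P + ((Q : ℝ≥0∞) ^ nn)⁻¹ = ((Q : ℝ≥0∞) ^ m)⁻¹ := by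
    have := μ_piecesAux hQ (nn - m) z
    rw [← hm, ← hP] at this
    have he : m + (nn - m) = nn := by omega
    rw [he] at this
    exact this
  have hμR' : μ Q (A ++ P ++ B) + ((Q : ℝ≥0∞) ^ nn)⁻¹ = μ Q R := by
    rw [← hRdec]
    simp only [μ_append, μ_cons]
    calc μ Q A + μ Q P + μ Q B + ((Q : ℝ≥0∞) ^ nn)⁻¹
        = μ Q A + ((μ Q P + ((Q : ℝ≥0∞) ^ nn)⁻¹) + μ Q B) := by ring
      _ = μ Q A + (((Q : ℝ≥0∞) ^ m)⁻¹ + μ Q B) := by rw [hμP]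
      _ = μ Q A + (((Q : ℝ≥0∞) ^ z.length)⁻¹ + μ Q B) := rfl
  -- new sortedness
  have hsorted' : (A ++ P ++ B).Pairwise (fun a b : StrQ Q => b.length ≤ a.length) := by
    rw [List.append_assoc, List.pairwise_append]
    refine ⟨hsA, ?_, ?_⟩
    · rw [List.pairwise_append]
      refine ⟨hP ▸ pieces_sorted (nn - m) z, hsB, ?_⟩
      intro a ha b hb
      have h1 := (hPlen a ha).1
      have h2 := hszB b hb
      omega
    · intro a ha b hb
      have h1 := hAmem a ha
      rw [List.mem_append] at hb
      rcases hb with hb | hb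
      · have := (hPlen b hb).2; omega
      · have h2 := hszB b hb; omega
  -- new incomparability
  have hinc' : (A ++ P ++ B).Pairwise (incomp Q) := by
    rw [List.append_assoc, List.pairwise_append]
    refine ⟨hiA, ?_, ?_⟩
    · rw [List.pairwise_append]
      refine ⟨hP ▸ pieces_pairwise hQ (nn - m) z, hiB, ?_⟩
      intro a ha b hb
      exact incomp_symm (incomp_of_prefix (incomp_symm (hizB b hb)) (hPz a ha))
    · intro a ha b hb
      have haz : incomp Q a z := hiAzB a ha z (List.mem_cons_self)
      rw [List.mem_append] at hb
      rcases hb with hb | hb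
      · exact incomp_of_prefix haz (hPz b hb)
      · exact hiAzB a ha b (List.mem_cons_of_mem z hb)
  -- new geometric bound
  have hgeo' : ∀ t : ℕ, μ Q ((A ++ P ++ B).filter (fun y => decide (t < y.length)))
      < ((Q : ℝ≥0∞) ^ t)⁻¹ := by
    intro t
    have hold := hGS.2.2 t
    rw [← hRdec, List.filter_append] at hold
    rcases lt_trichotomy t m with htm | htm
    · -- t < m
      have hfzB : (z :: B).filter (fun y => decide (t < y.length))
          = z :: B.filter (fun y => decide (t < y.length)) :=
        List.filter_cons_of_pos (by simp; omega)
      rw [hfzB] at hold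
      simp only [μ_append, μ_cons] at hold
      have hfP : P.filter (fun y => decide (t < y.length)) = P := by
        apply List.filter_eq_self.mpr
        intro y hy
        have := (hPlen y hy).1
        simp; omega
      simp only [List.filter_append, hfP, μ_append]
      have hPle : μ Q P ≤ ((Q : ℝ≥0∞) ^ m)⁻¹ := by
        rw [← hμP]; exact le_add_right le_rfl
      calc μ Q (A.filter (fun y => decide (t < y.length))) + μ Q P
            + μ Q (B.filter (fun y => decide (t < y.length)))
          ≤ μ Q (A.filter (fun y => decide (t < y.length))) + ((Q : ℝ≥0∞) ^ m)⁻¹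
            + μ Q (B.filter (fun y => decide (t < y.length))) := by gcongr
        _ = μ Q (A.filter (fun y => decide (t < y.length))) + (((Q : ℝ≥0∞) ^ z.length)⁻¹
            + μ Q (B.filter (fun y => decide (t < y.length)))) := by rw [hm]; ring
        _ < ((Q : ℝ≥0∞) ^ t)⁻¹ := hold
    · rcases lt_or_ge t nn with htn | htn
      · -- m ≤ t < nn
        have hfA : A.filter (fun y => decide (t < y.length)) = A := by
          apply List.filter_eq_self.mpr
          intro x hx
          have := hAmem x hx
          simp; omega
        have hfB : B.filter (fun y => decide (t < y.length)) = [] := by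
          apply List.filter_eq_nil_iff.mpr
          intro b hb
          have := hszB b hb
          simp; omega
        -- old bound at level nn :  μ A < Q^{-nn}
        have holdn := hGS.2.2 nn
        rw [← hRdec, List.filter_append] at holdn
        have hfzBn : (z :: B).filter (fun y => decide (nn < y.length))
            = B.filter (fun y => decide (nn < y.length)) :=
          List.filter_cons_of_neg (by simp; omega)
        have hfBn : B.filter (fun y => decide (nn < y.length)) = [] := by
          apply List.filter_eq_nil_iff.mpr
          intro b hb
          have := hszB b hb
          simp; omega
        have hfAn : A.filter (fun y => decide (nn < y.length)) = A := by
          apply List.filter_eq_self.mpr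
          intro x hx
          have := hAmem x hx
          simp; omega
        rw [hfzBn, hfBn, hfAn, List.append_nil] at holdn
        -- filtered measure of P
        have hfPμ : μ Q (P.filter (fun y => decide (t < y.length)))
            + ((Q : ℝ≥0∞) ^ nn)⁻¹ = ((Q : ℝ≥0∞) ^ t)⁻¹ := by
          have := μ_filter_piecesAux hQ (nn - m) z t (by omega) (by omega)
          have he : z.length + (nn - m) = nn := by omega
          rw [he] at this
          exact this
        simp only [List.filter_append, hfA, hfB, μ_append, μ_nil, add_zero]
        calc μ Q A + μ Q (P.filter (fun y => decide (t < y.length)))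
            < ((Q : ℝ≥0∞) ^ nn)⁻¹ + μ Q (P.filter (fun y => decide (t < y.length))) :=
              ENNReal.add_lt_add_right (μ_ne_top hQ _) holdn
          _ = ((Q : ℝ≥0∞) ^ t)⁻¹ := by rw [add_comm]; exact hfPμ
      · -- nn ≤ t
        have hfP : P.filter (fun y => decide (t < y.length)) = [] := by
          apply List.filter_eq_nil_iff.mpr
          intro y hy
          have := (hPlen y hy).2
          simp; omega
        have hfzB : (z :: B).filter (fun y => decide (t < y.length))
            = B.filter (fun y => decide (t < y.length)) :=
          List.filter_cons_of_neg (by simp; omega)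
        rw [hfzB] at hold
        simp only [List.filter_append, hfP, μ_append, μ_nil, add_zero] at hold ⊢
        exact hold
  -- assemble
  rw [hstep]
  refine ⟨hvlen, ⟨hsorted', hinc', hgeo'⟩, hμR', ?_, ?_⟩
  · intro z' hz'
    simp only [List.append_assoc, List.mem_append] at hz'
    rcases hz' with h' | h' | h'
    · exact incomp_symm (incomp_of_prefix (hiAzB z' h' z (List.mem_cons_self)) hvz)
    · exact hvP z' h'
    · exact incomp_symm (incomp_of_prefix (incomp_symm (hizB z' h')) hvz)
  · intro u hu
    have huz : incomp Q u z := hu z (by rw [← hRdec]; simp)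
    constructor
    · exact incomp_of_prefix huz hvz
    · intro z' hz'
      simp only [List.append_assoc, List.mem_append] at hz'
      rcases hz' with h' | h' | h'
      · exact hu z' (by rw [← hRdec]; simp [h'])
      · exact incomp_of_prefix huz (hPz z' h')
      · exact hu z' (by rw [← hRdec]; simp [h'])

/-! ### The main induction -/

theorem main_invariant (n : ℕ → ℕ)
    (hk : ∀ k, (∑ i ∈ Finset.range k, ((Q : ℝ≥0∞) ^ n i)⁻¹) ≤ 1) :
    ∀ k, GoodState (Rf Q n k) ∧
      μ Q (Rf Q n k) + (∑ i ∈ Finset.range k, ((Q : ℝ≥0∞) ^ n i)⁻¹) = 1 ∧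
      (∀ i, i < k → (wf Q n i).length = n i) ∧
      (∀ i, i < k → ∀ z ∈ Rf Q n k, incomp Q (wf Q n i) z) ∧
      (∀ i j, i < j → j < k → incomp Q (wf Q n i) (wf Q n j)) := by
  intro k
  induction k with
  | zero =>
    refine ⟨⟨?_, ?_, ?_⟩, ?_, ?_, ?_, ?_⟩
    · simp [Rf]
    · simp [Rf]
    · intro t
      have he : ([([] : StrQ Q)]).filter (fun y => decide (t < y.length)) = [] := by simp
      show μ Q (([([] : StrQ Q)]).filter (fun y => decide (t < y.length))) < _
      rw [he]
      simpa using qinv_pos hQ t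
    · show μ Q [([] : StrQ Q)] + _ = 1
      simp [μ]
    · omega
    · omega
    · omega
  | succ k ih =>
    obtain ⟨hGS, hμc, hlen, hincR, hpw⟩ := ih
    have hck_ne_top : (∑ i ∈ Finset.range k, ((Q : ℝ≥0∞) ^ n i)⁻¹) ≠ ⊤ := by
      refine (ENNReal.sum_lt_top.mpr fun i _ => ?_).ne
      exact lt_top_iff_ne_top.mpr (qinv_netop hQ (n i))
    have hle := hk (k + 1)
    rw [Finset.sum_range_succ] at hle
    have hμk : ((Q : ℝ≥0∞) ^ n k)⁻¹ ≤ μ Q (Rf Q n k) := by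
      have h1 : (∑ i ∈ Finset.range k, ((Q : ℝ≥0∞) ^ n i)⁻¹) + ((Q : ℝ≥0∞) ^ n k)⁻¹
          ≤ (∑ i ∈ Finset.range k, ((Q : ℝ≥0∞) ^ n i)⁻¹) + μ Q (Rf Q n k) := by
        rw [add_comm _ (μ Q (Rf Q n k)), hμc]
        exact hle
      exact (ENNReal.add_le_add_iff_left hck_ne_top).mp h1
    have hspec := step_spec hQ hGS hμk
    have hR1 : Rf Q n (k + 1) = (step Q (Rf Q n k) (n k)).2 := rfl
    have hw : wf Q n k = (step Q (Rf Q n k) (n k)).1 := rfl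
    refine ⟨hR1 ▸ hspec.2.1, ?_, ?_, ?_, ?_⟩
    · rw [hR1, Finset.sum_range_succ]
      calc μ Q (step Q (Rf Q n k) (n k)).2
            + (∑ i ∈ Finset.range k, ((Q : ℝ≥0∞) ^ n i)⁻¹ + ((Q : ℝ≥0∞) ^ n k)⁻¹)
          = (μ Q (step Q (Rf Q n k) (n k)).2 + ((Q : ℝ≥0∞) ^ n k)⁻¹)
            + ∑ i ∈ Finset.range k, ((Q : ℝ≥0∞) ^ n i)⁻¹ := by ring
        _ = μ Q (Rf Q n k) + ∑ i ∈ Finset.range k, ((Q : ℝ≥0∞) ^ n i)⁻¹ := by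
            rw [hspec.2.2.1]
        _ = 1 := hμc
    · intro i hi
      rcases Nat.lt_or_ge i k with h | h
      · exact hlen i h
      · have : i = k := by omega
        subst this
        rw [hw]
        exact hspec.1
    · intro i hi z' hz'
      rcases Nat.lt_or_ge i k with h | h
      · exact ((hspec.2.2.2.2 (wf Q n i) (hincR i h)).2) z' (hR1 ▸ hz')
      · have : i = k := by omega
        subst this
        rw [hw]
        exact hspec.2.2.2.1 z' (hR1 ▸ hz')
    · intro i j hij hj
      rcases Nat.lt_or_ge j k with h | h
      · exact hpw i j hij h
      · have : j = k := by omega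
        subst this
        rw [hw]
        exact (hspec.2.2.2.2 (wf Q n i) (hincR i hij)).1

end KC

/-- **Kraft–Chaitin Theorem.** Given `Q ≥ 2` and a computable sequence `n` of
non-negative integers with `∑ᵢ Q^{-nᵢ} ≤ 1`, one can effectively construct a computable
prefix-free sequence of strings `w` over `X_Q` with `|wᵢ| = nᵢ` for every `i`
(in particular the `wᵢ` are pairwise distinct). -/
theorem kraft_chaitin (Q : ℕ) (hQ : 2 ≤ Q) (n : ℕ → ℕ) (hn : Computable n)
    (hkraft : ∑' i : ℕ, ((Q : ℝ≥0∞) ^ (n i))⁻¹ ≤ 1) :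
    ∃ w : ℕ → Str Q, Computable w ∧ (∀ i, (w i).length = n i) ∧
      (∀ i j, i ≠ j → ¬ w i <+: w j) ∧ Function.Injective w := by
  haveI : NeZero Q := ⟨by omega⟩
  have hk : ∀ k, (∑ i ∈ Finset.range k, ((Q : ℝ≥0∞) ^ n i)⁻¹) ≤ 1 :=
    fun k => le_trans (ENNReal.sum_le_tsum _) hkraft
  have hpf : ∀ i j, i ≠ j → ¬ KC.wf Q n i <+: KC.wf Q n j := by
    intro i j hij
    rcases Nat.lt_or_ge i j with h | h
    · exact ((KC.main_invariant hQ n hk (j + 1)).2.2.2.2 i j h (Nat.lt_succ_self j)).1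
    · have h' : j < i := by omega
      exact ((KC.main_invariant hQ n hk (i + 1)).2.2.2.2 j i h' (Nat.lt_succ_self i)).2
  refine ⟨KC.wf Q n, KC.wf_computable Q n hn, ?_, hpf, ?_⟩
  · intro i
    exact (KC.main_invariant hQ n hk (i + 1)).2.2.1 i (Nat.lt_succ_self i)
  · intro i j hij
    by_contra hne
    exact hpf i j hne (hij ▸ List.prefix_refl (KC.wf Q n i))
end

section
/- For every t ≥ 0, the set C_{Q,t} = {x ∈ X_Q* : δ_Q(x) > -t} is immune, that is, C_{Q,t} is infinite and contains no infinite computably enumerable subset. -/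
open scoped ENNReal

namespace CQtAux

variable {Q : ℕ}

lemma hm_le {T : SDMachine Q} {x p : Str Q} (h : x ∈ T.f p) :
    Hm T x ≤ (p.length : ℕ∞) :=
  sInf_le ⟨p, h, rfl⟩

lemma exists_program {T : SDMachine Q} {x : Str Q} {m : ℕ} (h : Hm T x ≤ (m : ℕ∞)) :
    ∃ p, x ∈ T.f p ∧ p.length ≤ m := by
  by_contra hc
  push_neg at hc
  have h2 : ((m + 1 : ℕ) : ℕ∞) ≤ Hm T x := by
    apply le_sInf
    rintro b ⟨y, hy, rfl⟩
    exact Nat.cast_le.2 (hc y hy)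
  have h3 := h2.trans h
  have := Nat.cast_le.mp h3
  omega

lemma mem_dom {T : SDMachine Q} {x p : Str Q} (h : x ∈ T.f p) : p ∈ T.f.Dom :=
  (PFun.mem_dom T.f p).2 ⟨x, h⟩

lemma prefix_aux {z o : Fin Q} (hzo : z ≠ o) {j k : ℕ} {u v : Str Q}
    (h : (List.replicate j z ++ o :: u) <+: (List.replicate k z ++ o :: v)) :
    j = k ∧ u <+: v := by
  have hlen := h.length_le
  simp only [List.length_append, List.length_replicate, List.length_cons] at hlen
  have hjk : j = k := by
    by_contra hne
    rcases Nat.lt_or_ge j k with hlt | hge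
    · have h1 : (List.replicate j z ++ o :: u)[j]'(by simp) = o := by
        rw [List.getElem_append_right (by simp)]
        simp
      have h2 : (List.replicate k z ++ o :: v)[j]'(by simp; omega) = z := by
        rw [List.getElem_append_left (by simp; omega)]
        simp
      have h3 := h.getElem (i := j) (by simp)
      rw [h1, h2] at h3
      exact hzo h3.symm
    · have hlt : k < j := by omega
      have h1 : (List.replicate j z ++ o :: u)[k]'(by simp; omega) = z := by
        rw [List.getElem_append_left (by simp; omega)]
        simp
      have h2 : (List.replicate k z ++ o :: v)[k]'(by simp) = o := by
        rw [List.getElem_append_right (by simp)]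
        simp
      have h3 := h.getElem (i := k) (by simp; omega)
      rw [h1, h2] at h3
      exact hzo h3
  subst hjk
  obtain ⟨w, hw⟩ := h
  rw [List.append_assoc] at hw
  have h4 := List.append_cancel_left hw
  simp only [List.cons_append, List.cons.injEq, true_and] at h4
  exact ⟨rfl, ⟨w, h4⟩⟩

lemma counting (hQ : 2 ≤ Q) (U : SDMachine Q) (n : ℕ)
    (hall : ∀ x : Str Q, x.length = n + 1 ∨ x.length = n + 2 →
      ∃ p, x ∈ U.f p ∧ p.length ≤ n + 2) : False := by
  classical
  have hQ0 : 0 < Q := by omega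
  set z : Fin Q := ⟨0, hQ0⟩ with hz
  set L : Set (Str Q) := {x | x.length = n + 1 ∨ x.length = n + 2} with hL
  set M : Set (Str Q) := {x | x.length = n + 2} with hM
  have hLfin : L.Finite := by
    have h := (List.finite_length_eq (Fin Q) (n + 1)).union (List.finite_length_eq (Fin Q) (n + 2))
    convert h using 1
    ext x; simp [hL]
  have hMfin : M.Finite := List.finite_length_eq (Fin Q) (n + 2)
  choose p hp hlp using hall
  set Φ : Str Q → Str Q := fun x =>
    if hx : x.length = n + 1 ∨ x.length = n + 2 then
      p x hx ++ List.replicate (n + 2 - (p x hx).length) z else [] with hΦ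
  have hmaps : ∀ x ∈ L, Φ x ∈ M := by
    intro x hx
    have hx' : x.length = n + 1 ∨ x.length = n + 2 := hx
    have hl := hlp x hx'
    simp only [hΦ, dif_pos hx', hM, Set.mem_setOf_eq, List.length_append, List.length_replicate]
    omega
  have hinj : Set.InjOn Φ L := by
    intro x hx y hy hxy
    have hx' : x.length = n + 1 ∨ x.length = n + 2 := hx
    have hy' : y.length = n + 1 ∨ y.length = n + 2 := hy
    have hpx : p x hx' <+: Φ x := by simp only [hΦ, dif_pos hx']; exact ⟨_, rfl⟩
    have hpy : p y hy' <+: Φ y := by simp only [hΦ, dif_pos hy']; exact ⟨_, rfl⟩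
    rw [← hxy] at hpy
    have hcomp := List.prefix_or_prefix_of_prefix hpx hpy
    have hpe : p x hx' = p y hy' := by
      rcases hcomp with h | h
      · exact U.prefixFree _ (mem_dom (hp x hx')) _ (mem_dom (hp y hy')) h
      · exact (U.prefixFree _ (mem_dom (hp y hy')) _ (mem_dom (hp x hx')) h).symm
    exact Part.mem_unique (hp x hx') (hpe ▸ hp y hy')
  have hML : M ⊂ L := by
    constructor
    · intro x hx; exact Or.inr hx
    · intro hsub
      have h1 : List.replicate (n + 1) z ∈ L := Or.inl (by simp)
      have h2 := hsub h1
      simp only [hM, Set.mem_setOf_eq, List.length_replicate] at h2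
      omega
  have h1 : (Φ '' L).ncard = L.ncard := Set.ncard_image_of_injOn hinj
  have h2 : (Φ '' L).ncard ≤ M.ncard :=
    Set.ncard_le_ncard (Set.image_subset_iff.2 hmaps) hMfin
  have h3 : M.ncard < L.ncard := Set.ncard_lt_ncard hML hLfin
  omega


open Primrec in
lemma primrec_replicate (a : Fin Q) : Primrec (fun k => List.replicate k a : ℕ → Str Q) := by
  have h : Primrec (fun k => Nat.rec [] (fun _ ih => a :: ih) k : ℕ → Str Q) :=
    Primrec.nat_rec₁ ([] : Str Q) ((list_cons.comp (const a) snd).to₂)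
  refine h.of_eq fun k => ?_
  induction k with
  | zero => rfl
  | succ n ih => simpa [List.replicate_succ] using ih

open Primrec in
lemma primrec_drop : Primrec₂ (fun (l : Str Q) (n : ℕ) => l.drop n) := by
  have h : Primrec (fun p => Nat.rec p.1 (fun _ ih => ih.tail) p.2 : Str Q × ℕ → Str Q) :=
    Primrec.nat_rec' snd fst ((list_tail.comp (snd.comp snd)).to₂)
  have h2 : Primrec (fun p : Str Q × ℕ => p.1.drop p.2) := by
    refine h.of_eq fun p => ?_
    obtain ⟨l, n⟩ := p
    induction n with
    | zero => rfl
    | succ m ih => simp only [ih]; exact List.tail_drop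
  exact h2.to₂


/-- Parser for programs of the form `0^k 1`. -/
def parse1 (z o : Fin Q) (y : Str Q) : Option ℕ :=
  if y = List.replicate (y.length - 1) z ++ [o] then some (y.length - 1) else none

open Primrec in
lemma parse1_primrec (z o : Fin Q) : Primrec (parse1 z o) := by
  have hg : Primrec (fun y : Str Q => List.replicate (y.length - 1) z ++ [o]) :=
    list_append.comp ((primrec_replicate z).comp (pred.comp list_length)) (const [o])
  exact Primrec.ite (PrimrecRel.comp Primrec.eq Primrec.id hg)
    (option_some.comp (pred.comp list_length)) (const none)

lemma parse1_eq_some {z o : Fin Q} {y : Str Q} {k : ℕ} :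
    parse1 z o y = some k ↔ y = List.replicate k z ++ [o] := by
  constructor
  · intro h
    unfold parse1 at h
    split_ifs at h with hc
    · obtain rfl : y.length - 1 = k := by injection h
      exact hc
  · rintro rfl
    have hl : (List.replicate k z ++ [o]).length - 1 = k := by simp
    unfold parse1
    rw [hl, if_pos rfl]

/-- Parser for programs of the form `0^k 1 x` with `|x| = k`. -/
def parse2 (z o : Fin Q) (y : Str Q) : Option (Str Q) :=
  if y.length % 2 = 1 ∧ y = List.replicate (y.length / 2) z ++ o :: y.drop (y.length / 2 + 1)
  then some (y.drop (y.length / 2 + 1)) else none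

open Primrec in
lemma parse2_primrec (z o : Fin Q) : Primrec (parse2 z o) := by
  have hk : Primrec (fun y : Str Q => y.length / 2) :=
    nat_div.comp list_length (const 2)
  have hdrop : Primrec (fun y : Str Q => y.drop (y.length / 2 + 1)) :=
    primrec_drop.comp Primrec.id (succ.comp hk)
  have hg : Primrec (fun y : Str Q =>
      List.replicate (y.length / 2) z ++ o :: y.drop (y.length / 2 + 1)) :=
    list_append.comp ((primrec_replicate z).comp hk)
      (list_cons.comp (const o) hdrop)
  have hc1 : PrimrecPred (fun y : Str Q => y.length % 2 = 1) :=
    PrimrecRel.comp Primrec.eq (nat_mod.comp list_length (const 2)) (const 1)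
  have hc2 : PrimrecPred (fun y : Str Q =>
      y = List.replicate (y.length / 2) z ++ o :: y.drop (y.length / 2 + 1)) :=
    PrimrecRel.comp Primrec.eq Primrec.id hg
  exact Primrec.ite (hc1.and hc2) (option_some.comp hdrop) (const none)

lemma parse2_encode {z o : Fin Q} (x : Str Q) :
    parse2 z o (List.replicate x.length z ++ o :: x) = some x := by
  set k := x.length with hk
  set y : Str Q := List.replicate k z ++ o :: x with hy
  have hlen : y.length = 2 * k + 1 := by simp [hy]; omega
  have hdrop : y.drop (k + 1) = x := by
    have : y = (List.replicate k z ++ [o]) ++ x := by simp [hy]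
    rw [this, List.drop_left' (by simp)]
  have e1 : y.length % 2 = 1 := by omega
  have e2 : y.length / 2 = k := by omega
  unfold parse2
  rw [e2, hdrop, if_pos ⟨e1, hy.symm ▸ rfl⟩]

lemma parse2_some {z o : Fin Q} {y x : Str Q} (h : parse2 z o y = some x) :
    y = List.replicate x.length z ++ o :: x := by
  unfold parse2 at h
  split_ifs at h with hc
  obtain ⟨h1, h2⟩ := hc
  obtain rfl : y.drop (y.length / 2 + 1) = x := by injection h
  have hlen : y.length = y.length / 2 + 1 + (y.drop (y.length / 2 + 1)).length := by
    conv_lhs => rw [h2]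
    simp [List.length_drop]
    omega
  have hxlen : (y.drop (y.length / 2 + 1)).length = y.length / 2 := by
    simp [List.length_drop]; omega
  rw [hxlen]
  exact h2


lemma exists_T2 (hQ : 2 ≤ Q) :
    ∃ T : SDMachine Q, ∀ x : Str Q, Hm T x ≤ ((2 * x.length + 1 : ℕ) : ℕ∞) := by
  have h0 : 0 < Q := by omega
  have h1 : 1 < Q := by omega
  set z : Fin Q := ⟨0, h0⟩ with hzd
  set o : Fin Q := ⟨1, h1⟩ with hod
  have hzo : z ≠ o := by simp [hzd, hod, Fin.ext_iff]
  have hpf : PrefixFreeSet (PFun.Dom (fun y => (parse2 z o y : Part (Str Q)))) := by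
    intro a ha b hb hab
    obtain ⟨xa, hxa⟩ := (PFun.mem_dom _ _).1 ha
    obtain ⟨xb, hxb⟩ := (PFun.mem_dom _ _).1 hb
    rw [Part.mem_ofOption] at hxa hxb
    have ea := parse2_some hxa
    have eb := parse2_some hxb
    rw [ea, eb] at hab
    obtain ⟨hk, huv⟩ := prefix_aux hzo hab
    have hxab : xa = xb := huv.eq_of_length (by omega)
    rw [ea, eb, hxab]
  let T : SDMachine Q :=
    ⟨fun y => (parse2 z o y : Part (Str Q)),
      Computable.ofOption (parse2_primrec z o).to_comp, hpf⟩
  refine ⟨T, fun x => ?_⟩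
  have hmem : x ∈ T.f (List.replicate x.length z ++ o :: x) :=
    Part.mem_ofOption.2 (parse2_encode x)
  have hle := hm_le hmem
  have hlen : (List.replicate x.length z ++ o :: x).length = 2 * x.length + 1 := by
    simp; omega
  rwa [hlen] at hle

lemma hm_ne_top {U : SDMachine Q} (hQ : 2 ≤ Q) (hU : IsUniversal U) (x : Str Q) :
    Hm U x ≠ ⊤ := by
  obtain ⟨T, hT⟩ := exists_T2 hQ
  obtain ⟨ε, -, hε⟩ := hU T
  have h := (hε x).trans (add_le_add_left (hT x) _)
  intro htop
  rw [htop] at h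
  have h2 : (⊤ : ℕ∞) ≤ ((2 * x.length + 1 + ε : ℕ) : ℕ∞) := by
    rw [top_le_iff] at h ⊢
    rw [← h]
    push_cast
    ring
  rw [top_le_iff] at h2
  exact (ENat.coe_ne_top _) h2


open Nat.Partrec (Code)
open Nat.Partrec.Code

/-- Search function: looks for (a halting computation witnessing) an element of the
c.e. set coded by `c`, of length at least `2 * k`. -/
def Fsearch (Q : ℕ) (c : Code) (k m : ℕ) : Option (Str Q) :=
  (evaln m.unpair.1 c m.unpair.2).bind fun _ =>
    (Encodable.decode (α := Str Q) m.unpair.2).bind fun x =>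
      if 2 * k ≤ x.length then some x else none

open Primrec in
lemma fsearch_primrec (c : Code) : Primrec₂ (Fsearch Q c) := by
  have hev : Primrec (fun m : ℕ => evaln m.unpair.1 c m.unpair.2) :=
    primrec_evaln.comp (Primrec.pair (Primrec.pair (fst.comp Primrec.unpair) (const c))
      (snd.comp Primrec.unpair))
  have hdec : Primrec (fun m : ℕ => (Encodable.decode m.unpair.2 : Option (Str Q))) :=
    Primrec.decode.comp (snd.comp Primrec.unpair)
  have h2 : Primrec₂ (fun (q : (ℕ × ℕ) × ℕ) (x : Str Q) =>
      if 2 * q.1.1 ≤ x.length then some x else none) :=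
    (Primrec.ite (PrimrecRel.comp Primrec.nat_le
        (nat_mul.comp (const 2) (fst.comp (fst.comp fst))) (list_length.comp snd))
      (option_some.comp snd) (const none)).to₂
  have h1 : Primrec₂ (fun (p : ℕ × ℕ) (_ : ℕ) =>
      (Encodable.decode (α := Str Q) p.2.unpair.2).bind fun x =>
        if 2 * p.1 ≤ x.length then some x else none) :=
    (Primrec.option_bind (hdec.comp (snd.comp fst)) h2).to₂
  exact (Primrec.option_bind (hev.comp snd) h1).to₂

variable {g : Str Q →. Unit} {c : Code}

lemma fsearch_complete
    (hc : eval c = fun n => Part.bind ((Encodable.decode (α := Str Q) n) : Part (Str Q))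
      fun a => (g a).map Encodable.encode)
    {x : Str Q} {k : ℕ} (hx : ∃ u, u ∈ g x) (hlen : 2 * k ≤ x.length) :
    ∃ m, Fsearch Q c k m = some x := by
  obtain ⟨u, hu⟩ := hx
  have heval : Encodable.encode u ∈ eval c (Encodable.encode x) := by
    rw [hc]
    apply Part.mem_bind_iff.2
    refine ⟨x, ?_, Part.mem_map _ hu⟩
    rw [Encodable.encodek]
    exact Part.mem_some x
  obtain ⟨s, hs⟩ := evaln_complete.1 heval
  refine ⟨Nat.pair s (Encodable.encode x), ?_⟩
  have hs' : evaln s c (Encodable.encode x) = some (Encodable.encode u) := hs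
  simp [Fsearch, Nat.unpair_pair, hs', Encodable.encodek, hlen]

lemma fsearch_sound
    (hc : eval c = fun n => Part.bind ((Encodable.decode (α := Str Q) n) : Part (Str Q))
      fun a => (g a).map Encodable.encode)
    {x : Str Q} {k m : ℕ} (h : Fsearch Q c k m = some x) :
    (g x).Dom ∧ 2 * k ≤ x.length := by
  simp only [Fsearch, Option.bind_eq_some_iff] at h
  obtain ⟨e, hev, x0, hdec, h⟩ := h
  have hl : 2 * k ≤ x0.length := by
    by_contra hl
    rw [if_neg hl] at h
    exact absurd h (by simp)
  rw [if_pos hl] at h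
  obtain rfl : x0 = x := by injection h
  refine ⟨?_, hl⟩
  have hee : e ∈ eval c m.unpair.2 := evaln_sound hev
  rw [hc] at hee
  obtain ⟨a, ha, hmap⟩ := Part.mem_bind_iff.1 hee
  rw [Part.mem_ofOption] at ha
  rw [hdec] at ha
  obtain rfl : a = x0 := by cases ha; rfl
  obtain ⟨b, hb, -⟩ := (Part.mem_map_iff _).1 hmap
  exact Part.dom_iff_mem.2 ⟨b, hb⟩


lemma ce_finite (hQ : 2 ≤ Q) (U : SDMachine Q) (hU : IsUniversal U) (t : ℕ)
    {A : Set (Str Q)} (hsub : A ⊆ {x : Str Q | -(t : ℤ) < deltaC U x}) (hce : CEset A) :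
    A.Finite := by
  by_contra hInf
  obtain ⟨g, hg, hgdom⟩ := hce
  obtain ⟨c, hc⟩ := Nat.Partrec.Code.exists_code.1 hg
  have h0 : 0 < Q := by omega
  have h1 : 1 < Q := by omega
  set z : Fin Q := ⟨0, h0⟩ with hzd
  set o : Fin Q := ⟨1, h1⟩ with hod
  have hzo : z ≠ o := by simp [hzd, hod, Fin.ext_iff]
  have hF : Computable₂ (Fsearch Q c) := (fsearch_primrec c).to_comp
  have hpart : Partrec (fun y : Str Q => (Part.ofOption (parse1 z o y)).bind
      fun k => Nat.rfindOpt (Fsearch Q c k)) :=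
    Partrec.bind (Computable.ofOption (parse1_primrec z o).to_comp)
      (((Partrec.rfindOpt hF).comp Computable.snd).to₂)
  have hpf1 : PrefixFreeSet (PFun.Dom (fun y : Str Q => (Part.ofOption (parse1 z o y)).bind
      fun k => Nat.rfindOpt (Fsearch Q c k))) := by
    intro a ha b hb hab
    obtain ⟨xa, hxa⟩ := (PFun.mem_dom _ _).1 ha
    obtain ⟨xb, hxb⟩ := (PFun.mem_dom _ _).1 hb
    obtain ⟨ka, hka, -⟩ := Part.mem_bind_iff.1 hxa
    obtain ⟨kb, hkb, -⟩ := Part.mem_bind_iff.1 hxb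
    rw [Part.mem_ofOption] at hka hkb
    have ea := parse1_eq_some.1 hka
    have eb := parse1_eq_some.1 hkb
    rw [ea, eb] at hab ⊢
    obtain ⟨hk, -⟩ := prefix_aux hzo hab
    rw [hk]
  set T1 : SDMachine Q := ⟨_, hpart, hpf1⟩ with hT1
  obtain ⟨ε, hεpos, hε⟩ := hU T1
  set k := ε + t + 1 with hkdef
  obtain ⟨x0, hx0⟩ := (Set.Infinite.diff (show A.Infinite from hInf)
    (List.finite_length_lt (Fin Q) (2 * k))).nonempty
  have hx0A : x0 ∈ A := hx0.1
  have hx0len : 2 * k ≤ x0.length := not_lt.1 hx0.2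
  have hx0g : ∃ u, u ∈ g x0 := (PFun.mem_dom _ _).1 (by rw [hgdom]; exact hx0A)
  obtain ⟨m0, hm0⟩ := fsearch_complete hc hx0g hx0len
  have hdomk : (Nat.rfindOpt (Fsearch Q c k)).Dom := Nat.rfindOpt_dom.2 ⟨m0, x0, hm0⟩
  have hx'mem : (Nat.rfindOpt (Fsearch Q c k)).get hdomk ∈ Nat.rfindOpt (Fsearch Q c k) :=
    Part.get_mem hdomk
  set x' := (Nat.rfindOpt (Fsearch Q c k)).get hdomk with hx'd
  obtain ⟨m, hm⟩ := Nat.rfindOpt_spec hx'mem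
  obtain ⟨hx'dom, hx'len⟩ := fsearch_sound hc hm
  have hx'A : x' ∈ A := by
    rw [← hgdom]
    obtain ⟨u, hu⟩ := Part.dom_iff_mem.1 hx'dom
    exact (PFun.mem_dom _ _).2 ⟨u, hu⟩
  have hprog : x' ∈ T1.f (List.replicate k z ++ [o]) := by
    apply Part.mem_bind_iff.2
    refine ⟨k, Part.mem_ofOption.2 ?_, hx'mem⟩
    exact parse1_eq_some.2 rfl
  have h1 : Hm T1 x' ≤ ((k + 1 : ℕ) : ℕ∞) := by
    have hle := hm_le hprog
    have hlen : (List.replicate k z ++ [o]).length = k + 1 := by simp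
    rwa [hlen] at hle
  have h2 : Hm U x' ≤ ((k + 1 + ε : ℕ) : ℕ∞) := by
    refine (hε x').trans ?_
    calc Hm T1 x' + (ε : ℕ∞) ≤ ((k + 1 : ℕ) : ℕ∞) + (ε : ℕ∞) := add_le_add_left h1 _
      _ = ((k + 1 + ε : ℕ) : ℕ∞) := by push_cast; rfl
  have hne := hm_ne_top hQ hU x'
  have h3 : (Hm U x').toNat ≤ k + 1 + ε := by
    rw [← Nat.cast_le (α := ℕ∞), ENat.coe_toNat hne]
    exact h2
  have h4 := hsub hx'A
  simp only [Set.mem_setOf_eq, deltaC] at h4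
  omega

end CQtAux

/-- For every `t ≥ 0`, the set `C_{Q,t} = {x ∈ X_Q* : δ_Q(x) > -t}` is immune,
i.e. infinite and containing no infinite c.e. subset. -/
theorem C_Qt_immune {Q : ℕ} (hQ : 2 ≤ Q) (U : SDMachine Q) (hU : IsUniversal U) (t : ℕ) :
    Immune {x : Str Q | -(t : ℤ) < deltaC U x} := by
  constructor
  · intro hfin
    obtain ⟨N, hN⟩ : ∃ N, ∀ x ∈ {x : Str Q | -(t : ℤ) < deltaC U x}, x.length ≤ N := by
      obtain ⟨N, hN⟩ := (hfin.image List.length).bddAbove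
      exact ⟨N, fun x hx => hN (Set.mem_image_of_mem _ hx)⟩
    apply CQtAux.counting hQ U (N + t)
    intro x hx
    have hxC : x ∉ {x : Str Q | -(t : ℤ) < deltaC U x} := by
      intro hmem
      have := hN x hmem
      omega
    simp only [Set.mem_setOf_eq, deltaC, not_lt] at hxC
    have hne := CQtAux.hm_ne_top hQ hU x
    have hH : Hm U x ≤ ((N + t + 2 : ℕ) : ℕ∞) := by
      rw [← ENat.coe_toNat hne]
      exact Nat.cast_le.2 (by omega)
    exact CQtAux.exists_program hH
  · intro A hA hce
    exact CQtAux.ce_finite hQ U hU t hA hce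
end

section
/- For every t ≥ 0, the set complex_{Q,t} = {x ∈ X_Q* : δ_Q(x) > t} is immune, that is, it is infinite and contains no infinite computably enumerable subset. In particular, every computably enumerable set A ⊆ X_Q* with A ⊆ {x : δ_Q(x) > t} is finite. -/
open scoped ENNReal

/-- All strings of length `k`. -/
def allLists (Q : ℕ) : ℕ → Finset (Str Q)
  | 0 => {([] : Str Q)}
  | k+1 => (Finset.univ ×ˢ allLists Q k).image fun p => p.1 :: p.2

lemma mem_allLists {Q k : ℕ} {l : Str Q} : l ∈ allLists Q k ↔ l.length = k := by
  induction k generalizing l with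
  | zero => simp [allLists, List.length_eq_zero_iff]
  | succ k ih =>
    cases l with
    | nil => simp [allLists]
    | cons a l => simp [allLists, ih]

lemma card_allLists {Q k : ℕ} : (allLists Q k).card = Q ^ k := by
  induction k with
  | zero => simp [allLists]
  | succ k ih =>
    have hinj : Function.Injective fun p : Fin Q × Str Q => p.1 :: p.2 := by
      rintro ⟨a, l⟩ ⟨b, m⟩ h
      simp only [List.cons.injEq] at h
      exact Prod.ext h.1 h.2
    rw [allLists, Finset.card_image_of_injective _ hinj, Finset.card_product, ih]
    simp [pow_succ, mul_comm]

lemma kraft_count {Q m : ℕ} {P : Set (Str Q)} (hP : PrefixFreeSet P)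
    (F : Finset (Str Q)) (p : Str Q → Str Q)
    (hmem : ∀ x ∈ F, p x ∈ P) (hinj : ∀ x ∈ F, ∀ y ∈ F, p x = p y → x = y)
    (hlen : ∀ x ∈ F, (p x).length ≤ m) :
    ∑ x ∈ F, Q ^ (m - (p x).length) ≤ Q ^ m := by
  classical
  set ext : Str Q → Finset (Str Q) :=
    fun x => (allLists Q (m - (p x).length)).image fun s => p x ++ s with hext
  have hcard : ∀ x ∈ F, (ext x).card = Q ^ (m - (p x).length) := by
    intro x _
    rw [hext, Finset.card_image_of_injective _ (fun s t h => List.append_cancel_left h),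
      card_allLists]
  have hdisj : ∀ x ∈ F, ∀ y ∈ F, x ≠ y → Disjoint (ext x) (ext y) := by
    intro x hx y hy hxy
    rw [Finset.disjoint_left]
    intro z hzx hzy
    simp only [hext, Finset.mem_image] at hzx hzy
    obtain ⟨s, _, hs⟩ := hzx
    obtain ⟨s', _, hs'⟩ := hzy
    have h1 : p x <+: z := ⟨s, hs⟩
    have h2 : p y <+: z := ⟨s', hs'⟩
    have : p x = p y := by
      rcases List.prefix_or_prefix_of_prefix h1 h2 with h | h
      · exact hP _ (hmem x hx) _ (hmem y hy) h
      · exact (hP _ (hmem y hy) _ (hmem x hx) h).symm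
    exact hxy (hinj x hx y hy this)
  have hsub : F.biUnion ext ⊆ allLists Q m := by
    intro z hz
    simp only [Finset.mem_biUnion, hext, Finset.mem_image] at hz
    obtain ⟨x, hx, s, hs, rfl⟩ := hz
    rw [mem_allLists]
    have := hlen x hx
    have hslen : s.length = m - (p x).length := mem_allLists.mp hs
    simp [hslen]
    omega
  calc ∑ x ∈ F, Q ^ (m - (p x).length) = ∑ x ∈ F, (ext x).card :=
        Finset.sum_congr rfl fun x hx => (hcard x hx).symm
    _ = (F.biUnion ext).card := (Finset.card_biUnion hdisj).symm
    _ ≤ (allLists Q m).card := Finset.card_le_card hsub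
    _ = Q ^ m := card_allLists

lemma no_total_compress {Q : ℕ} (hQ : 2 ≤ Q) {P : Set (Str Q)} (hP : PrefixFreeSet P)
    (t L : ℕ) (p : Str Q → Str Q)
    (hmem : ∀ x : Str Q, L < x.length → p x ∈ P)
    (hinj : ∀ x y : Str Q, L < x.length → L < y.length → p x = p y → x = y)
    (hlen : ∀ x : Str Q, L < x.length → (p x).length ≤ x.length + t) : False := by
  classical
  set N := Q ^ t + 1 with hN
  set m := L + N + t with hm
  set F : Finset (Str Q) := (Finset.range N).biUnion fun i => allLists Q (L + 1 + i) with hF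
  have hmemF : ∀ x ∈ F, L < x.length ∧ x.length ≤ L + N := by
    intro x hx
    simp only [hF, Finset.mem_biUnion, Finset.mem_range, mem_allLists] at hx
    obtain ⟨i, hi, hx⟩ := hx
    omega
  have key : ∑ x ∈ F, Q ^ (m - (p x).length) ≤ Q ^ m := by
    refine kraft_count hP F p (fun x hx => hmem x (hmemF x hx).1)
      (fun x hx y hy => hinj x y (hmemF x hx).1 (hmemF y hy).1) (fun x hx => ?_)
    have := hlen x (hmemF x hx).1
    have := (hmemF x hx).2
    omega
  have lower : N * Q ^ (m - t) ≤ ∑ x ∈ F, Q ^ (m - (p x).length) := by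
    have hdisj : ∀ i ∈ Finset.range N, ∀ j ∈ Finset.range N, i ≠ j →
        Disjoint (allLists Q (L + 1 + i)) (allLists Q (L + 1 + j)) := by
      intro i _ j _ hij
      rw [Finset.disjoint_left]
      intro z hzi hzj
      rw [mem_allLists] at hzi hzj
      omega
    rw [hF, Finset.sum_biUnion]
    · have : ∀ i ∈ Finset.range N,
          Q ^ (m - t) ≤ ∑ x ∈ allLists Q (L + 1 + i), Q ^ (m - (p x).length) := by
        intro i hi
        rw [Finset.mem_range] at hi
        have hterm : ∀ x ∈ allLists Q (L + 1 + i),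
            Q ^ (m - (L + 1 + i) - t) ≤ Q ^ (m - (p x).length) := by
          intro x hx
          rw [mem_allLists] at hx
          apply Nat.pow_le_pow_right (by omega)
          have h1 := hlen x (by omega)
          omega
        calc Q ^ (m - t) = Q ^ (L + 1 + i) * Q ^ (m - (L + 1 + i) - t) := by
              rw [← pow_add]
              congr 1
              omega
          _ = ∑ _x ∈ allLists Q (L + 1 + i), Q ^ (m - (L + 1 + i) - t) := by
              rw [Finset.sum_const, card_allLists, smul_eq_mul]
          _ ≤ ∑ x ∈ allLists Q (L + 1 + i), Q ^ (m - (p x).length) :=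
              Finset.sum_le_sum hterm
      calc N * Q ^ (m - t) = ∑ _i ∈ Finset.range N, Q ^ (m - t) := by
            rw [Finset.sum_const, Finset.card_range, smul_eq_mul]
        _ ≤ _ := Finset.sum_le_sum this
    · intro i hi j hj hij
      exact hdisj i hi j hj hij
  have : N * Q ^ (m - t) ≤ Q ^ m := le_trans lower key
  have hmsplit : Q ^ m = Q ^ (m - t) * Q ^ t := by
    rw [← pow_add]; congr 1; omega
  rw [hmsplit] at this
  have hpos : 0 < Q ^ (m - t) := Nat.pow_pos (by omega)
  rw [mul_comm (Q ^ (m - t)) (Q ^ t)] at this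
  have : N ≤ Q ^ t := Nat.le_of_mul_le_mul_right this hpos
  omega

/-- machine outputting `x` on the empty program -/
def constMachine {Q : ℕ} (x : Str Q) : SDMachine Q where
  f := fun y => if y = ([] : Str Q) then Part.some x else Part.none
  partrec := by
    have h : Computable fun y : Str Q => if y = ([] : Str Q) then some x else none :=
      Primrec.to_comp <| Primrec.ite (Primrec.eq.comp Primrec.id (Primrec.const []))
        (Primrec.const (some x)) (Primrec.const none)
    refine (Computable.ofOption h).of_eq fun y => ?_
    by_cases hy : y = ([] : Str Q) <;> simp [hy]
  prefixFree := by
    intro a ha b hb _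
    have hpa : a = ([] : Str Q) := by
      by_contra h
      have ha := (PFun.mem_dom _ _).mp ha
      obtain ⟨y, hy⟩ := ha
      simp [h] at hy
    have hpb : b = ([] : Str Q) := by
      by_contra h
      have hb := (PFun.mem_dom _ _).mp hb
      obtain ⟨y, hy⟩ := hb
      simp [h] at hy
    rw [hpa, hpb]

lemma Hm_lt_top {Q : ℕ} (U : SDMachine Q) (hU : IsUniversal U) (x : Str Q) :
    Hm U x < ⊤ := by
  obtain ⟨ε, -, hε⟩ := hU (constMachine x)
  have h1 : Hm (constMachine x) x ≤ 0 := by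
    apply sInf_le
    refine ⟨[], ?_, by simp⟩
    simp [constMachine, Part.mem_some_iff]
  calc Hm U x ≤ Hm (constMachine x) x + (ε : ℕ∞) := hε x
    _ ≤ 0 + (ε : ℕ∞) := by exact add_le_add_left h1 _
    _ < ⊤ := by simp [lt_top_iff_ne_top]
  
/-- existence of a program attaining `Hm`. -/
lemma exists_min_program {Q : ℕ} (U : SDMachine Q) (hU : IsUniversal U) (x : Str Q) :
    ∃ y : Str Q, x ∈ U.f y ∧ (y.length : ℕ∞) = Hm U x := by
  have hne : ((fun y : Str Q => (y.length : ℕ∞)) '' {y | x ∈ U.f y}).Nonempty := by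
    by_contra h
    rw [Set.not_nonempty_iff_eq_empty] at h
    have : Hm U x = ⊤ := by rw [Hm, h, sInf_empty]
    exact absurd this (Hm_lt_top U hU x).ne
  have := csInf_mem hne
  obtain ⟨y, hy, hlen⟩ := this
  exact ⟨y, hy, hlen⟩

lemma part1 {Q : ℕ} (hQ : 2 ≤ Q) (U : SDMachine Q) (hU : IsUniversal U) (t : ℕ) :
    {x : Str Q | (t : ℤ) < deltaC U x}.Infinite := by
  set S := {x : Str Q | (t : ℤ) < deltaC U x} with hS
  by_contra h
  rw [Set.not_infinite] at h
  obtain ⟨L, hL⟩ := (h.image List.length).bddAbove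
  have hall : ∀ x : Str Q, ∃ y : Str Q,
      L < x.length → x ∈ U.f y ∧ y.length ≤ x.length + t := by
    intro x
    by_cases hx : L < x.length
    · have hxS : x ∉ S := by
        intro hm
        exact absurd (hL ⟨x, hm, rfl⟩) (by omega)
      have hδ : deltaC U x ≤ (t : ℤ) := not_lt.mp hxS
      obtain ⟨y, hy, hlen⟩ := exists_min_program U hU x
      have htn : (Hm U x).toNat = y.length := by
        rw [← hlen]; simp
      refine ⟨y, fun _ => ⟨hy, ?_⟩⟩
      rw [deltaC, htn] at hδ
      omega
    · exact ⟨[], fun hc => absurd hc hx⟩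
  choose p hp using hall
  exact no_total_compress hQ U.prefixFree t L p
    (fun x hx => (PFun.mem_dom _ _).mpr ⟨x, (hp x hx).1⟩)
    (fun x y hx hy heq => Part.mem_unique (hp x hx).1 (heq ▸ (hp y hy).1))
    (fun x hx => (hp x hx).2)

open Nat.Partrec (Code)
open Nat.Partrec.Code

section Part2

variable {Q : ℕ}

def prog (hQ : 2 ≤ Q) (n : ℕ) : Str Q :=
  List.replicate n ⟨0, by omega⟩ ++ [⟨1, by omega⟩]

lemma prog_length (hQ : 2 ≤ Q) (n : ℕ) : (prog hQ n).length = n + 1 := by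
  simp [prog]

lemma prog_prefix (hQ : 2 ≤ Q) {n m : ℕ} (h : prog hQ n <+: prog hQ m) : n = m := by
  by_contra hne
  have hlen : n + 1 ≤ m + 1 := by
    have := h.length_le
    simpa [prog_length] using this
  have hnm : n < m := by omega
  have heq := List.prefix_iff_eq_take.mp h
  rw [prog_length] at heq
  have htake : List.take (n + 1) (prog hQ m) =
      List.replicate (n + 1) (⟨0, by omega⟩ : Fin Q) := by
    rw [prog, List.take_append_of_le_length (by simp [hnm.le]; omega), List.take_replicate]
    congr 1
    omega
  rw [htake, List.replicate_succ'] at heq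
  rw [prog] at heq
  have h2 := List.append_cancel_left heq
  have : (⟨1, by omega⟩ : Fin Q) = ⟨0, by omega⟩ := by
    simpa using h2
  simp [Fin.mk.injEq] at this

def progIndex (hQ : 2 ≤ Q) (s : Str Q) : Option ℕ :=
  if s = prog hQ (s.length - 1) then some (s.length - 1) else none

lemma progIndex_eq_some (hQ : 2 ≤ Q) {s : Str Q} {n : ℕ} :
    progIndex hQ s = some n ↔ s = prog hQ n := by
  unfold progIndex
  split
  · rename_i hcond
    constructor
    · intro h
      have hn : s.length - 1 = n := Option.some.inj h
      rw [← hn]; exact hcond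
    · intro h
      have : s.length - 1 = n := by rw [h, prog_length]; omega
      rw [this]
  · rename_i hcond
    constructor
    · intro h; exact absurd h (by simp)
    · intro h
      exfalso
      apply hcond
      have : s.length - 1 = n := by rw [h, prog_length]; omega
      rw [this, ← h]

lemma primrec_replicate (hQ : 2 ≤ Q) :
    Primrec fun n : ℕ => List.replicate n (⟨0, by omega⟩ : Fin Q) := by
  have h : Primrec (Nat.rec ([] : Str Q)
      (fun _ ih => (⟨0, by omega⟩ : Fin Q) :: ih)) :=
    Primrec.nat_rec₁ _ (Primrec.list_cons.comp (Primrec.const _) Primrec.snd)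
  refine h.of_eq fun n => ?_
  induction n with
  | zero => rfl
  | succ k ih => simp [List.replicate_succ, ih]

lemma primrec_prog (hQ : 2 ≤ Q) : Primrec (prog hQ) := by
  unfold prog
  exact Primrec.list_append.comp (primrec_replicate hQ) (Primrec.const _)

lemma primrec_progIndex (hQ : 2 ≤ Q) : Primrec (progIndex hQ) := by
  unfold progIndex
  have hl : Primrec fun s : Str Q => s.length - 1 :=
    Primrec.nat_sub.comp Primrec.list_length (Primrec.const 1)
  exact Primrec.ite (Primrec.eq.comp Primrec.id ((primrec_prog hQ).comp hl))
    (Primrec.option_some.comp hl) (Primrec.const none)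

def searchFun (c : Code) (n m : ℕ) : Option (Str Q) :=
  (Encodable.decode (α := Str Q) m.unpair.1).bind fun x =>
    bif decide (2 * n + 1 ≤ x.length) &&
        (Nat.Partrec.Code.evaln m.unpair.2 c (Encodable.encode x)).isSome
    then some x else none

lemma primrec_searchFun (c : Code) : Primrec₂ (searchFun (Q := Q) c) := by
  unfold searchFun
  have hdec : Primrec fun p : ℕ × ℕ => Encodable.decode (α := Str Q) p.2.unpair.1 :=
    Primrec.decode.comp (Primrec.fst.comp (Primrec.unpair.comp Primrec.snd))
  refine Primrec.option_bind hdec ?_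
  have h1 : Primrec fun q : (ℕ × ℕ) × Str Q => decide (2 * q.1.1 + 1 ≤ q.2.length) :=
    PrimrecPred.decide (Primrec.nat_le.comp (Primrec.nat_double_succ.comp (Primrec.fst.comp Primrec.fst))
      (Primrec.list_length.comp Primrec.snd))
  have h2 : Primrec fun q : (ℕ × ℕ) × Str Q =>
      (Nat.Partrec.Code.evaln q.1.2.unpair.2 c (Encodable.encode q.2)).isSome := by
    have harg : Primrec fun q : (ℕ × ℕ) × Str Q =>
        ((q.1.2.unpair.2, c), Encodable.encode q.2) :=
      ((Primrec.snd.comp (Primrec.unpair.comp (Primrec.snd.comp Primrec.fst))).pair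
        (Primrec.const c)).pair (Primrec.encode.comp Primrec.snd)
    exact Primrec.option_isSome.comp (Nat.Partrec.Code.primrec_evaln.comp harg)
  have hb : Primrec fun q : (ℕ × ℕ) × Str Q =>
      (decide (2 * q.1.1 + 1 ≤ q.2.length) &&
        (Nat.Partrec.Code.evaln q.1.2.unpair.2 c (Encodable.encode q.2)).isSome) :=
    (Primrec.dom_bool₂ (· && ·)).comp h1 h2
  exact Primrec.cond hb (Primrec.option_some.comp Primrec.snd) (Primrec.const none)

def machineF (hQ : 2 ≤ Q) (c : Code) : Str Q →. Str Q :=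
  fun s => Part.bind (progIndex hQ s : Part ℕ) fun n => Nat.rfindOpt (searchFun c n)

lemma partrec_machineF (hQ : 2 ≤ Q) (c : Code) : Partrec (machineF hQ c) := by
  unfold machineF
  refine Partrec.bind (Computable.ofOption (primrec_progIndex hQ).to_comp) ?_
  exact (Partrec.rfindOpt (primrec_searchFun c).to_comp).comp Computable.snd

lemma searchFun_eq_some {c : Code} {n m : ℕ} {x : Str Q}
    (h : searchFun c n m = some x) :
    2 * n + 1 ≤ x.length ∧
      ∃ k, (Nat.Partrec.Code.evaln k c (Encodable.encode x)).isSome := by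
  unfold searchFun at h
  rw [Option.bind_eq_some_iff] at h
  obtain ⟨x', hx', hcond⟩ := h
  rcases hb : (decide (2 * n + 1 ≤ x'.length) &&
      (Nat.Partrec.Code.evaln m.unpair.2 c (Encodable.encode x')).isSome) with _ | _
  · rw [hb] at hcond; simp at hcond
  · rw [hb] at hcond
    simp at hcond
    subst hcond
    rw [Bool.and_eq_true, decide_eq_true_iff] at hb
    exact ⟨hb.1, m.unpair.2, hb.2⟩

lemma searchFun_pair {c : Code} {n k : ℕ} {x : Str Q} (hlen : 2 * n + 1 ≤ x.length)
    (hev : (Nat.Partrec.Code.evaln k c (Encodable.encode x)).isSome) :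
    searchFun c n (Nat.pair (Encodable.encode x) k) = some x := by
  unfold searchFun
  simp [Nat.unpair_pair, Encodable.encodek, hlen, hev, (by omega : 2 * n < x.length)]

lemma mem_machineF {hQ : 2 ≤ Q} {c : Code} {s x : Str Q} :
    x ∈ machineF hQ c s ↔ ∃ n, s = prog hQ n ∧ x ∈ Nat.rfindOpt (searchFun c n) := by
  unfold machineF
  rw [Part.mem_bind_iff]
  constructor
  · rintro ⟨n, hn, hx⟩
    rw [Part.mem_ofOption] at hn
    exact ⟨n, (progIndex_eq_some hQ).mp hn, hx⟩
  · rintro ⟨n, hs, hx⟩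
    exact ⟨n, Part.mem_ofOption.mpr ((progIndex_eq_some hQ).mpr hs), hx⟩

lemma machineF_prefixFree (hQ : 2 ≤ Q) (c : Code) :
    PrefixFreeSet (machineF hQ c).Dom := by
  intro a ha b hb hpre
  obtain ⟨x, hx⟩ := (PFun.mem_dom _ _).mp ha
  obtain ⟨y, hy⟩ := (PFun.mem_dom _ _).mp hb
  obtain ⟨n, rfl, -⟩ := mem_machineF.mp hx
  obtain ⟨m, rfl, -⟩ := mem_machineF.mp hy
  rw [prog_prefix hQ hpre]

lemma gdom_iff (g : Str Q →. Unit) (c : Code)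
    (hc : Nat.Partrec.Code.eval c = fun n =>
      Part.bind (Encodable.decode (α := Str Q) n) fun a => (g a).map Encodable.encode)
    (x : Str Q) :
    (g x).Dom ↔ ∃ k, (Nat.Partrec.Code.evaln k c (Encodable.encode x)).isSome := by
  have heval : Nat.Partrec.Code.eval c (Encodable.encode x) =
      (g x).map Encodable.encode := by
    rw [hc]
    simp [Encodable.encodek]
  constructor
  · intro h
    have hmem : Encodable.encode ((g x).get h) ∈
        Nat.Partrec.Code.eval c (Encodable.encode x) := by
      rw [heval]
      exact (Part.mem_map_iff _).mpr ⟨(g x).get h, Part.get_mem h, rfl⟩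
    obtain ⟨k, hk⟩ := Nat.Partrec.Code.evaln_complete.mp hmem
    exact ⟨k, Option.isSome_iff_exists.mpr ⟨_, hk⟩⟩
  · rintro ⟨k, hk⟩
    obtain ⟨v, hv⟩ := Option.isSome_iff_exists.mp hk
    have hmem : v ∈ Nat.Partrec.Code.eval c (Encodable.encode x) :=
      Nat.Partrec.Code.evaln_sound hv
    rw [heval, Part.mem_map_iff _] at hmem
    obtain ⟨u, hu, -⟩ := hmem
    exact Part.dom_iff_mem.mpr ⟨u, hu⟩

end Part2

lemma part2 {Q : ℕ} (hQ : 2 ≤ Q) (U : SDMachine Q) (hU : IsUniversal U) (t : ℕ)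
    (A : Set (Str Q)) (hce : CEset A)
    (hsub : A ⊆ {x : Str Q | (t : ℤ) < deltaC U x}) : A.Finite := by
  by_contra hfin
  obtain ⟨g, hg, hdom⟩ := hce
  obtain ⟨c, hc⟩ := Nat.Partrec.Code.exists_code.mp hg
  set T : SDMachine Q :=
    ⟨machineF hQ c, partrec_machineF hQ c, machineF_prefixFree hQ c⟩ with hT
  obtain ⟨ε, hεpos, hε⟩ := hU T
  have hx : ∃ x ∈ A, 2 * ε + 1 ≤ x.length := by
    by_contra hno
    push_neg at hno
    refine hfin ((List.finite_length_le (Fin Q) (2 * ε)).subset fun x hxA => ?_)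
    have := hno x hxA
    simp only [Set.mem_setOf_eq]
    omega
  obtain ⟨x, hxA, hxlen⟩ := hx
  have hgx : (g x).Dom := by
    rw [← hdom] at hxA
    exact Part.dom_iff_mem.mpr ((PFun.mem_dom _ _).mp hxA)
  obtain ⟨k, hk⟩ := (gdom_iff g c hc x).mp hgx
  have hsdom : (Nat.rfindOpt (searchFun (Q := Q) c ε)).Dom :=
    Nat.rfindOpt_dom.mpr ⟨Nat.pair (Encodable.encode x) k, x, searchFun_pair hxlen hk⟩
  set x₀ := (Nat.rfindOpt (searchFun (Q := Q) c ε)).get hsdom with hx₀def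
  have hx₀mem : x₀ ∈ Nat.rfindOpt (searchFun (Q := Q) c ε) := Part.get_mem hsdom
  obtain ⟨m, hm⟩ := Nat.rfindOpt_spec hx₀mem
  rw [Option.mem_def] at hm
  obtain ⟨hx₀len, k₀, hk₀⟩ := searchFun_eq_some hm
  have hx₀A : x₀ ∈ A := by
    rw [← hdom]
    exact (PFun.mem_dom _ _).mpr
      (Part.dom_iff_mem.mp ((gdom_iff g c hc x₀).mpr ⟨k₀, hk₀⟩))
  have hTx₀ : Hm T x₀ ≤ ((ε + 1 : ℕ) : ℕ∞) := by
    apply sInf_le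
    refine ⟨prog hQ ε, ?_, by simp [prog_length]⟩
    show x₀ ∈ machineF hQ c (prog hQ ε)
    exact mem_machineF.mpr ⟨ε, rfl, hx₀mem⟩
  have hUx₀ : Hm U x₀ ≤ ((2 * ε + 1 : ℕ) : ℕ∞) := by
    calc Hm U x₀ ≤ Hm T x₀ + (ε : ℕ∞) := hε x₀
      _ ≤ ((ε + 1 : ℕ) : ℕ∞) + (ε : ℕ∞) := add_le_add_left hTx₀ _
      _ = ((2 * ε + 1 : ℕ) : ℕ∞) := by push_cast; ring
  have htn : (Hm U x₀).toNat ≤ 2 * ε + 1 := by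
    have := ENat.toNat_le_toNat hUx₀ (ENat.coe_ne_top _)
    rwa [ENat.toNat_natCast] at this
  have hδ := hsub hx₀A
  simp only [Set.mem_setOf_eq, deltaC] at hδ
  omega

/-- For every `t ≥ 0`, the set `complex_{Q,t} = {x ∈ X_Q* : δ_Q(x) > t}` is immune;
in particular every c.e. subset of it is finite. -/
theorem complex_Qt_immune {Q : ℕ} (hQ : 2 ≤ Q) (U : SDMachine Q) (hU : IsUniversal U) (t : ℕ) :
    Immune {x : Str Q | (t : ℤ) < deltaC U x} ∧
      ∀ A : Set (Str Q), CEset A → A ⊆ {x : Str Q | (t : ℤ) < deltaC U x} → A.Finite := by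
  refine ⟨⟨part1 hQ U hU t, fun A hsub hce => part2 hQ U hU t A hce hsub⟩,
    fun A hce hsub => part2 hQ U hU t A hce hsub⟩
end

section
/- Let T ⊆ X_Q* be computably enumerable and let g, g′ : T → B* be two Gödel numberings. Then there effectively exists a constant c (depending on U_2, g and g′) such that for all u ∈ T, |δ_g(u) − δ_{g′}(u)| ≤ c. Hence, asymptotically, the δ-measure is independent of the Gödel numbering. -/
open scoped ENNReal

/-- A Gödel numbering for a set `T ⊆ X_Q*`: a partial computable, one-to-one function
from `T` into binary strings. -/
structure GoedelNumbering (Q : ℕ) (T : Set (Str Q)) where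
  g : Str Q →. Str 2
  partrec : Partrec g
  dom_eq : g.Dom = T
  injective : ∀ u ∈ T, ∀ v ∈ T, g u = g v → u = v

/-- The binary name `g(u)` of `u ∈ T`. -/
noncomputable def GoedelNumbering.val {Q : ℕ} {T : Set (Str Q)} (gn : GoedelNumbering Q T)
    (u : Str Q) (hu : u ∈ T) : Str 2 :=
  (gn.g u).get (by rw [← gn.dom_eq] at hu; exact hu)

/-- The δ-complexity induced by a Gödel numbering:
`δ_g(u) = H_2(g(u)) − ⌈log₂ Q⌉ · |u|_Q`.  (Here `⌈log₂ Q⌉ = Nat.clog 2 Q`.) -/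
noncomputable def deltaG {Q : ℕ} {T : Set (Str Q)} (U2 : SDMachine 2)
    (gn : GoedelNumbering Q T) (u : Str Q) (hu : u ∈ T) : ℤ :=
  ((Hm U2 (gn.val u hu)).toNat : ℤ) - (Nat.clog 2 Q : ℤ) * (u.length : ℤ)

/-- Every partrec function has a partrec "inverse choice" function. -/
lemma exists_partrec_inverse {Q : ℕ} (g : Str Q →. Str 2) (hg : Partrec g) :
    ∃ pinv : Str 2 →. Str Q, Partrec pinv ∧
      (∀ w u', u' ∈ pinv w → w ∈ g u') ∧ (∀ u w, w ∈ g u → (pinv w).Dom) := by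
  obtain ⟨c, hc⟩ := Nat.Partrec.Code.exists_code.1 hg
  classical
  set F : Str 2 → ℕ → Option (Str Q) := fun w n =>
    (Nat.Partrec.Code.evaln n.unpair.2 c n.unpair.1).bind fun m =>
      if m = Encodable.encode w then Encodable.decode n.unpair.1 else none with hF
  have hFcomp : Computable₂ F := by
    have h1 : Primrec fun p : Str 2 × ℕ =>
        Nat.Partrec.Code.evaln p.2.unpair.2 c p.2.unpair.1 :=
      Nat.Partrec.Code.primrec_evaln.comp
        (((Primrec.snd.comp (Primrec.unpair.comp Primrec.snd)).pair
            (Primrec.const c)).pair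
          (Primrec.fst.comp (Primrec.unpair.comp Primrec.snd)))
    have h2 : Primrec₂ fun (p : Str 2 × ℕ) (m : ℕ) =>
        if m = Encodable.encode p.1 then (Encodable.decode p.2.unpair.1 : Option (Str Q))
        else none := by
      apply Primrec.ite
      · exact Primrec.eq.comp Primrec.snd (Primrec.encode.comp (Primrec.fst.comp Primrec.fst))
      · exact Primrec.decode.comp
          (Primrec.fst.comp (Primrec.unpair.comp (Primrec.snd.comp Primrec.fst)))
      · exact Primrec.const none
    exact (Primrec.option_bind h1 h2).to_comp.to₂
  refine ⟨fun w => Nat.rfindOpt (F w), Partrec.rfindOpt hFcomp, ?_, ?_⟩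
  · intro w u' hu'
    obtain ⟨n, hn⟩ := Nat.rfindOpt_spec hu'
    simp only [hF, Option.mem_def, Option.bind_eq_some_iff] at hn
    obtain ⟨m, hm, hif⟩ := hn
    by_cases hme : m = Encodable.encode w
    · rw [if_pos hme] at hif
      subst hme
      have hev : Encodable.encode w ∈ Nat.Partrec.Code.eval c n.unpair.1 :=
        Nat.Partrec.Code.evaln_sound hm
      rw [hc] at hev
      simp only [Part.bind_eq_bind, Part.mem_bind_iff] at hev
      obtain ⟨a, ha, hb⟩ := hev
      have : (Encodable.decode n.unpair.1 : Option (Str Q)) = some a := by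
        simpa [Part.mem_coe] using ha
      rw [this] at hif
      obtain rfl : a = u' := by simpa using hif
      simp only [Part.mem_map_iff] at hb
      obtain ⟨v, hv, hvw⟩ := hb
      rwa [Encodable.encode_injective hvw] at hv
    · rw [if_neg hme] at hif; simp at hif
  · intro u w hw
    have hev : Encodable.encode w ∈ Nat.Partrec.Code.eval c (Encodable.encode u) := by
      rw [hc]
      simp only [Part.bind_eq_bind, Part.mem_bind_iff]
      exact ⟨u, by simp [Part.mem_coe], Part.mem_map _ hw⟩
    obtain ⟨k, hk⟩ := Nat.Partrec.Code.evaln_complete.1 hev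
    apply Nat.rfindOpt_dom.2
    refine ⟨Nat.pair (Encodable.encode u) k, u, ?_⟩
    simp only [hF, Option.mem_def, Nat.unpair_pair, Option.bind_eq_some_iff]
    exact ⟨Encodable.encode w, hk, by simp⟩

/-- Composing a universal machine with a partrec postprocessing yields a machine `M` with
`Hm M x ≤ Hm U y` whenever `x ∈ k y`. -/
lemma exists_comp_machine (U : SDMachine 2) (k : Str 2 →. Str 2) (hk : Partrec k) :
    ∃ M : SDMachine 2, ∀ x y, x ∈ k y → Hm M x ≤ Hm U y := by
  refine ⟨⟨fun p => (U.f p).bind k, ?_, ?_⟩, ?_⟩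
  · exact U.partrec.bind ((hk.comp Computable.snd).to₂ : Partrec₂ fun (_ : Str 2) w => k w)
  · intro x hx y hy hxy
    apply U.prefixFree x ?_ y ?_ hxy
    · obtain ⟨a, ha⟩ := Part.dom_iff_mem.1 hx
      obtain ⟨b, hb, -⟩ := Part.mem_bind_iff.1 ha
      exact Part.dom_iff_mem.2 ⟨b, hb⟩
    · obtain ⟨a, ha⟩ := Part.dom_iff_mem.1 hy
      obtain ⟨b, hb, -⟩ := Part.mem_bind_iff.1 ha
      exact Part.dom_iff_mem.2 ⟨b, hb⟩
  · intro x y hxy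
    apply sInf_le_sInf
    apply Set.image_mono
    intro p hp
    exact Part.mem_bind_iff.2 ⟨y, hp, hxy⟩

lemma key_ineq {Q : ℕ} {T : Set (Str Q)} (U2 : SDMachine 2) (hU2 : IsUniversal U2)
    (gn gn' : GoedelNumbering Q T) :
    ∃ ε : ℕ, ∀ u, ∀ hu : u ∈ T,
      Hm U2 (gn.val u hu) ≤ Hm U2 (gn'.val u hu) + (ε : ℕ∞) := by
  obtain ⟨pinv, hpinv, hsound, hdom⟩ := exists_partrec_inverse gn'.g gn'.partrec
  set k : Str 2 →. Str 2 := fun w => (pinv w).bind gn.g with hkdef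
  have hkpr : Partrec k :=
    hpinv.bind ((gn.partrec.comp Computable.snd).to₂ : Partrec₂ fun (_ : Str 2) u => gn.g u)
  obtain ⟨M, hM⟩ := exists_comp_machine U2 k hkpr
  obtain ⟨ε, -, hε⟩ := hU2 M
  refine ⟨ε, fun u hu => ?_⟩
  have hwmem : gn'.val u hu ∈ gn'.g u := Part.get_mem _
  have hd : (pinv (gn'.val u hu)).Dom := hdom u _ hwmem
  set u' : Str Q := (pinv (gn'.val u hu)).get hd with hu'def
  have hu'mem : u' ∈ pinv (gn'.val u hu) := Part.get_mem hd
  have hgu' : gn'.val u hu ∈ gn'.g u' := hsound _ _ hu'mem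
  have hu'T : u' ∈ T := by rw [← gn'.dom_eq]; exact Part.dom_iff_mem.2 ⟨_, hgu'⟩
  have hequ : u' = u := by
    apply gn'.injective u' hu'T u hu
    rw [(Part.eq_some_iff.2 hgu'), (Part.eq_some_iff.2 hwmem)]
  have hxk : gn.val u hu ∈ k (gn'.val u hu) := by
    refine Part.mem_bind_iff.2 ⟨u', hu'mem, ?_⟩
    rw [hequ]; exact Part.get_mem _
  calc Hm U2 (gn.val u hu) ≤ Hm M (gn.val u hu) + (ε : ℕ∞) := hε _
    _ ≤ Hm U2 (gn'.val u hu) + (ε : ℕ∞) := by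
        exact add_le_add (hM _ _ hxk) le_rfl

lemma abs_toNat_sub_le {a b : ℕ∞} {ε ε' : ℕ} (h1 : a ≤ b + ε) (h2 : b ≤ a + ε') :
    |((a.toNat : ℤ) - b.toNat)| ≤ (max ε ε' : ℤ) := by
  have hM1 : (ε : ℤ) ≤ max ε ε' := by exact_mod_cast le_max_left ε ε'
  have hM2 : (ε' : ℤ) ≤ max ε ε' := by exact_mod_cast le_max_right ε ε'
  rcases eq_or_ne b ⊤ with hb | hb
  · have ha : a = ⊤ := by
      by_contra ha
      rw [hb, top_le_iff] at h2
      exact (WithTop.add_ne_top.2 ⟨ha, WithTop.natCast_ne_top ε'⟩) h2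
    simp only [ha, hb, ENat.toNat_top, Nat.cast_zero, sub_zero, abs_zero]
    positivity
  · have ha : a ≠ ⊤ := by
      intro ha
      rw [ha, top_le_iff] at h1
      exact (WithTop.add_ne_top.2 ⟨hb, WithTop.natCast_ne_top ε⟩) h1
    lift a to ℕ using ha with m
    lift b to ℕ using hb with n
    have h1' : m ≤ n + ε := by exact_mod_cast h1
    have h2' : n ≤ m + ε' := by exact_mod_cast h2
    rw [ENat.toNat_coe, ENat.toNat_coe, abs_le]
    have h1'' : (m:ℤ) ≤ n + ε := by exact_mod_cast h1'
    have h2'' : (n:ℤ) ≤ m + ε' := by exact_mod_cast h2'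
    have hl : (↑ε:ℤ) ≤ ↑ε ⊔ ↑ε' := le_max_left _ _
    have hr : (↑ε':ℤ) ≤ ↑ε ⊔ ↑ε' := le_max_right _ _
    constructor
    · linarith
    · linarith

/-- For a c.e. set `T ⊆ X_Q*` and two Gödel numberings `g, g' : T → B*`, there effectively
is a constant `c` with `|δ_g(u) − δ_{g'}(u)| ≤ c` for all `u ∈ T`: asymptotically, the
δ-measure is independent of the Gödel numbering. -/
theorem deltaG_goedel_independent {Q : ℕ} (hQ : 2 ≤ Q)
    (U2 : SDMachine 2) (hU2 : IsUniversal U2) (T : Set (Str Q)) (hT : CEset T)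
    (gn gn' : GoedelNumbering Q T) :
    ∃ c : ℕ, ∀ u, ∀ hu : u ∈ T,
      |deltaG U2 gn u hu - deltaG U2 gn' u hu| ≤ (c : ℤ) := by
  obtain ⟨ε, hε⟩ := key_ineq U2 hU2 gn gn'
  obtain ⟨ε', hε'⟩ := key_ineq U2 hU2 gn' gn
  refine ⟨max ε ε', fun u hu => ?_⟩
  have h := abs_toNat_sub_le (hε u hu) (hε' u hu)
  have : deltaG U2 gn u hu - deltaG U2 gn' u hu =
      ((Hm U2 (gn.val u hu)).toNat : ℤ) - ((Hm U2 (gn'.val u hu)).toNat : ℤ) := by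
    unfold deltaG; ring
  rw [this]
  simpa using h
end

section
/- For every fixed integer M, lim_{n→∞} Q^{−n} · card{x ∈ X_Q* : |x|_Q = n and δ_Q(x) ≤ M} = 0. -/
open scoped ENNReal

-- auxiliary machine
def decAux {Q : ℕ} (z : Fin Q) (y : Str Q) : Option (Str Q) :=
  if y.length = 2 * (y.idxOf z) + 1 then some (List.tail^[y.idxOf z + 1] y) else none

lemma decAux_primrec {Q : ℕ} (z : Fin Q) : Primrec (decAux z) := by
  have hidx : Primrec fun y : Str Q => y.idxOf z :=
    Primrec.list_idxOf.comp (Primrec.const z) Primrec.id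
  have hdrop : Primrec fun y : Str Q => List.tail^[y.idxOf z + 1] y :=
    Primrec.nat_iterate (Primrec.succ.comp hidx) Primrec.id
      ((Primrec.list_tail.comp Primrec.snd).to₂)
  have hcond : PrimrecPred fun y : Str Q => y.length = 2 * (y.idxOf z) + 1 :=
    Primrec.eq.comp Primrec.list_length
      (Primrec.succ.comp ((Primrec.nat_mul).comp (Primrec.const 2) hidx))
  exact Primrec.ite hcond (Primrec.option_some.comp hdrop) (Primrec.const none)

lemma tail_iter_eq_drop {α : Type*} : ∀ (n : ℕ) (l : List α), List.tail^[n] l = l.drop n := by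
  intro n
  induction n with
  | zero => intro l; simp
  | succ k ih =>
    intro l
    rw [Function.iterate_succ_apply', ih, List.tail_drop]

lemma decAux_cond {Q : ℕ} {z : Fin Q} {y : Str Q} {x : Str Q} (h : decAux z y = some x) :
    y.length = 2 * (y.idxOf z) + 1 := by
  by_contra hc
  simp [decAux, hc] at h

def auxMachine {Q : ℕ} (z : Fin Q) : SDMachine Q where
  f := fun y => (decAux z y : Part (Str Q))
  partrec := Computable.ofOption (decAux_primrec z).to_comp
  prefixFree := by
    intro y hy y' hy' hpre
    replace hy := (PFun.mem_dom (fun y => (decAux z y : Part (Str Q))) y).mp hy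
    replace hy' := (PFun.mem_dom (fun y => (decAux z y : Part (Str Q))) y').mp hy'
    obtain ⟨a, ha⟩ := hy
    obtain ⟨a', ha'⟩ := hy'
    rw [Part.mem_ofOption, Option.mem_def] at ha ha'
    have hc := decAux_cond ha
    have hc' := decAux_cond ha'
    have hmem : z ∈ y := List.idxOf_lt_length_iff.mp (by omega)
    obtain ⟨t, rfl⟩ := hpre
    have hidx : (y ++ t).idxOf z = y.idxOf z := List.idxOf_append_of_mem hmem
    rw [hidx] at hc'
    have : t = [] := by
      have := List.length_append (as := y) (bs := t)
      rw [hc'] at this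
      have ht : t.length = 0 := by omega
      exact List.length_eq_zero_iff.mp ht
    simp [this]

lemma hm_auxMachine {Q : ℕ} (hQ : 2 ≤ Q) (x : Str Q) :
    Hm (auxMachine (⟨0, by omega⟩ : Fin Q)) x ≤ ((2 * x.length + 1 : ℕ) : ℕ∞) := by
  set z : Fin Q := ⟨0, by omega⟩ with hz
  set o : Fin Q := ⟨1, by omega⟩ with ho
  set y : Str Q := List.replicate x.length o ++ z :: x with hy
  have hoz : o ≠ z := by
    simp [ho, hz, Fin.ext_iff]
  have hnotmem : z ∉ List.replicate x.length o := by
    intro h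
    exact hoz ((List.eq_of_mem_replicate h).symm)
  have hidx : y.idxOf z = x.length := by
    rw [hy, List.idxOf_append_of_notMem hnotmem, List.idxOf_cons_self,
      List.length_replicate, Nat.add_zero]
  have hlen : y.length = 2 * x.length + 1 := by
    rw [hy]; simp [List.length_append, List.length_replicate]; omega
  have hdec : decAux z y = some x := by
    rw [decAux, hidx, if_pos hlen, tail_iter_eq_drop]
    congr 1
    have : y = (List.replicate x.length o ++ [z]) ++ x := by
      rw [hy]; simp
    rw [this]
    exact List.drop_left' (by simp)
  have hmem : x ∈ (auxMachine z).f y := by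
    show x ∈ ((decAux z y : Part (Str Q)))
    rw [Part.mem_ofOption, Option.mem_def]
    exact hdec
  calc Hm (auxMachine z) x ≤ (y.length : ℕ∞) := sInf_le ⟨y, hmem, rfl⟩
    _ = ((2 * x.length + 1 : ℕ) : ℕ∞) := by rw [hlen]

lemma hm_finite {Q : ℕ} (hQ : 2 ≤ Q) (U : SDMachine Q)
    (hU : ∀ T : SDMachine Q, ∃ ε : ℕ, 0 < ε ∧ ∀ x, Hm U x ≤ Hm T x + (ε : ℕ∞)) (x : Str Q) :
    Hm U x ≠ ⊤ := by
  obtain ⟨ε, _, hε⟩ := hU (auxMachine (⟨0, by omega⟩ : Fin Q))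
  have h1 : Hm U x ≤ ((2 * x.length + 1 : ℕ) : ℕ∞) + (ε : ℕ∞) :=
    le_trans (hε x) (add_le_add_left (hm_auxMachine hQ x) _)
  have h2 : ((2 * x.length + 1 : ℕ) : ℕ∞) + (ε : ℕ∞) = ((2 * x.length + 1 + ε : ℕ) : ℕ∞) := by
    push_cast; ring
  rw [h2] at h1
  exact ne_top_of_le_ne_top (ENat.coe_ne_top _) h1

lemma hm_attained {Q : ℕ} (U : SDMachine Q) (x : Str Q) (h : Hm U x ≠ ⊤) :
    ∃ y : Str Q, x ∈ U.f y ∧ (y.length : ℕ∞) = Hm U x := by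
  have hlt : Hm U x < Hm U x + 1 := (ENat.lt_add_one_iff h).mpr le_rfl
  rw [Hm] at hlt h ⊢
  obtain ⟨a, haS, halt⟩ := sInf_lt_iff.mp hlt
  have hle : a ≤ sInf ((fun y : Str Q => (y.length : ℕ∞)) '' {y | x ∈ U.f y}) :=
    (ENat.lt_add_one_iff h).mp halt
  have heq : a = sInf ((fun y : Str Q => (y.length : ℕ∞)) '' {y | x ∈ U.f y}) :=
    le_antisymm hle (sInf_le haS)
  obtain ⟨y, hy, hya⟩ := haS
  exact ⟨y, hy, by simp only at hya; rw [hya, heq]⟩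

lemma kraft_aux {Q : ℕ} (hQ : 1 ≤ Q) : ∀ (L : ℕ) (F : Finset (Str Q)),
    (∀ p ∈ F, p.length ≤ L) → (∀ x ∈ F, ∀ y ∈ F, x <+: y → x = y) →
    ∑ p ∈ F, ((Q : ℝ)⁻¹) ^ p.length ≤ 1 := by
  have hQ0 : (0 : ℝ) < Q := by exact_mod_cast Nat.lt_of_lt_of_le Nat.zero_lt_one hQ
  intro L
  induction L with
  | zero =>
    intro F hlen hpf
    have hsub : F ⊆ {([] : Str Q)} := by
      intro p hp
      rw [Finset.mem_singleton]
      exact List.length_eq_zero_iff.mp (Nat.le_zero.mp (hlen p hp))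
    rcases Finset.subset_singleton_iff.mp hsub with rfl | rfl <;> simp
  | succ L ih =>
    intro F hlen hpf
    by_cases hnil : ([] : Str Q) ∈ F
    · have hF : F = {([] : Str Q)} := by
        apply Finset.eq_singleton_iff_unique_mem.mpr
        exact ⟨hnil, fun y hy => ((hpf _ hnil _ hy List.nil_prefix)).symm⟩
      simp [hF]
    · haveI : Inhabited (Fin Q) := ⟨⟨0, by omega⟩⟩
      rw [← Finset.sum_fiberwise_of_maps_to
        (g := fun p : Str Q => p.headI) (t := (Finset.univ : Finset (Fin Q)))
        (fun p _ => Finset.mem_univ _) (fun p => ((Q : ℝ)⁻¹) ^ p.length)]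
      have key : ∀ a : Fin Q,
          ∑ p ∈ F.filter (fun p => p.headI = a), ((Q : ℝ)⁻¹) ^ p.length ≤ (Q : ℝ)⁻¹ := by
        intro a
        have hrec : ∀ p ∈ F.filter (fun p => p.headI = a), p = a :: p.tail := by
          intro p hp
          rcases Finset.mem_filter.mp hp with ⟨hpF, hph⟩
          cases p with
          | nil => exact absurd hpF hnil
          | cons b t => simp only [List.headI] at hph; rw [hph]; rfl
        set Fa := (F.filter (fun p => p.headI = a)).image List.tail with hFa
        have hsum : ∑ p ∈ F.filter (fun p => p.headI = a), ((Q : ℝ)⁻¹) ^ p.length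
            = ∑ q ∈ Fa, ((Q : ℝ)⁻¹) ^ (q.length + 1) := by
          rw [hFa, Finset.sum_image]
          · apply Finset.sum_congr rfl
            intro p hp
            conv_lhs => rw [hrec p hp]
            simp
          · intro p hp p' hp' htl
            rw [hrec p hp, hrec p' hp', htl]
        have hFa_len : ∀ q ∈ Fa, q.length ≤ L := by
          intro q hq
          rw [hFa, Finset.mem_image] at hq
          obtain ⟨p, hp, rfl⟩ := hq
          have h1 : p.length ≤ L + 1 := hlen p (Finset.mem_filter.mp hp).1
          have h2 : p = a :: p.tail := hrec p hp
          have : p.length = p.tail.length + 1 := by conv_lhs => rw [h2, List.length_cons]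
          omega
        have hFa_pf : ∀ q ∈ Fa, ∀ q' ∈ Fa, q <+: q' → q = q' := by
          intro q hq q' hq' hpre
          rw [hFa, Finset.mem_image] at hq hq'
          obtain ⟨p, hp, rfl⟩ := hq
          obtain ⟨p', hp', rfl⟩ := hq'
          have h : p = p' := by
            apply hpf p (Finset.mem_filter.mp hp).1 p' (Finset.mem_filter.mp hp').1
            rw [hrec p hp, hrec p' hp']
            exact List.cons_prefix_cons.mpr ⟨rfl, hpre⟩
          rw [h]
        calc ∑ p ∈ F.filter (fun p => p.headI = a), ((Q : ℝ)⁻¹) ^ p.length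
            = (Q : ℝ)⁻¹ * ∑ q ∈ Fa, ((Q : ℝ)⁻¹) ^ q.length := by
              rw [hsum, Finset.mul_sum]
              apply Finset.sum_congr rfl
              intro q _
              rw [pow_succ]
              ring
          _ ≤ (Q : ℝ)⁻¹ * 1 := by
              apply mul_le_mul_of_nonneg_left (ih Fa hFa_len hFa_pf) (by positivity)
          _ = (Q : ℝ)⁻¹ := mul_one _
      calc ∑ a : Fin Q, ∑ p ∈ F.filter (fun p => p.headI = a), ((Q : ℝ)⁻¹) ^ p.length
          ≤ ∑ _a : Fin Q, (Q : ℝ)⁻¹ := Finset.sum_le_sum (fun a _ => key a)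
        _ = (Q : ℝ) * (Q : ℝ)⁻¹ := by simp [Finset.card_univ, mul_comm]
        _ = 1 := mul_inv_cancel₀ (ne_of_gt hQ0)

lemma kraft {Q : ℕ} (hQ : 1 ≤ Q) (F : Finset (Str Q))
    (hpf : ∀ x ∈ F, ∀ y ∈ F, x <+: y → x = y) :
    ∑ p ∈ F, ((Q : ℝ)⁻¹) ^ p.length ≤ 1 :=
  kraft_aux hQ (F.sup List.length) F (fun p hp => Finset.le_sup hp) hpf

/-- For every fixed integer `M`,
`lim_{n→∞} Q^{-n} · card {x ∈ X_Q* : |x|_Q = n, δ_Q(x) ≤ M} = 0`. -/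
theorem low_deltaC_density_zero {Q : ℕ} (hQ : 2 ≤ Q) (U : SDMachine Q)
    (hU : IsUniversal U) (M : ℤ) :
    Filter.Tendsto
      (fun n : ℕ =>
        ({x : Str Q | x.length = n ∧ deltaC U x ≤ M}.ncard : ℝ) / (Q : ℝ) ^ n)
      Filter.atTop (nhds 0) := by
  have hQ1 : (1 : ℝ) < Q := by exact_mod_cast (by omega : 1 < Q)
  have hQ0 : (0 : ℝ) < Q := by linarith
  have hfin : ∀ x : Str Q, Hm U x ≠ ⊤ := hm_finite hQ U hU
  choose prog hprog1 hprog2 using fun x => hm_attained U x (hfin x)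
  have hproginj : Function.Injective prog := by
    intro x₁ x₂ h
    exact Part.mem_unique (h ▸ hprog1 x₁) (hprog1 x₂)
  have hSfin : ∀ n : ℕ, {x : Str Q | x.length = n ∧ deltaC U x ≤ M}.Finite := fun n =>
    (List.finite_length_eq (Fin Q) n).subset fun x hx => hx.1
  set A : ℕ → Finset (Str Q) := fun n => (hSfin n).toFinset with hA
  have hmemA : ∀ {n : ℕ} {x : Str Q}, x ∈ A n ↔ (x.length = n ∧ deltaC U x ≤ M) := by
    intro n x
    rw [hA, Set.Finite.mem_toFinset, Set.mem_setOf_eq]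
  set t : ℕ → ℝ := fun n => ∑ x ∈ A n, ((Q : ℝ)⁻¹) ^ (prog x).length with ht
  have ht0 : ∀ n, 0 ≤ t n := fun n => Finset.sum_nonneg fun x _ => by positivity
  have hpartial : ∀ N, ∑ n ∈ Finset.range N, t n ≤ 1 := by
    intro N
    have hdisj : (↑(Finset.range N) : Set ℕ).PairwiseDisjoint A := by
      intro i _ j _ hij
      show Disjoint (A i) (A j)
      rw [Finset.disjoint_left]
      intro x hxi hxj
      exact hij ((hmemA.mp hxi).1.symm.trans (hmemA.mp hxj).1)
    rw [ht, ← Finset.sum_biUnion hdisj,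
      ← Finset.sum_image (g := prog) (f := fun p : Str Q => ((Q : ℝ)⁻¹) ^ p.length)
        (fun x _ y _ h => hproginj h)]
    apply kraft (by omega)
    intro p hp p' hp' hpre
    obtain ⟨x, hx, rfl⟩ := Finset.mem_image.mp hp
    obtain ⟨x', hx', rfl⟩ := Finset.mem_image.mp hp'
    exact U.prefixFree _ ((PFun.mem_dom U.f _).mpr ⟨x, hprog1 x⟩) _
      ((PFun.mem_dom U.f _).mpr ⟨x', hprog1 x'⟩) hpre
  have htend : Filter.Tendsto t Filter.atTop (nhds 0) :=
    (summable_of_sum_range_le ht0 hpartial).tendsto_atTop_zero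
  have hbound : ∀ n : ℕ,
      ({x : Str Q | x.length = n ∧ deltaC U x ≤ M}.ncard : ℝ) / (Q : ℝ) ^ n
        ≤ (Q : ℝ) ^ M * t n := by
    intro n
    have hcard : ({x : Str Q | x.length = n ∧ deltaC U x ≤ M}.ncard : ℝ) = (A n).card := by
      rw [Set.ncard_eq_toFinset_card _ (hSfin n)]
    have h1 : ∀ x ∈ A n, (Q : ℝ) ^ (-(n : ℤ) - M) ≤ ((Q : ℝ)⁻¹) ^ (prog x).length := by
      intro x hx
      obtain ⟨hxl, hxd⟩ := hmemA.mp hx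
      have htn : (Hm U x).toNat = (prog x).length := by
        rw [← hprog2 x, ENat.toNat_coe]
      have hlen : ((prog x).length : ℤ) ≤ (n : ℤ) + M := by
        rw [deltaC, htn, hxl] at hxd
        omega
      have heq : ((Q : ℝ)⁻¹) ^ (prog x).length = (Q : ℝ) ^ (-((prog x).length : ℤ)) := by
        rw [zpow_neg, ← zpow_natCast, inv_zpow]
      rw [heq]
      exact zpow_le_zpow_right₀ hQ1.le (by omega)
    have h2 : ((A n).card : ℝ) * (Q : ℝ) ^ (-(n : ℤ) - M) ≤ t n := by
      have := Finset.card_nsmul_le_sum (A n) (fun x => ((Q : ℝ)⁻¹) ^ (prog x).length)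
        ((Q : ℝ) ^ (-(n : ℤ) - M)) h1
      rwa [nsmul_eq_mul] at this
    have h3 : (Q : ℝ) ^ M * (((A n).card : ℝ) * (Q : ℝ) ^ (-(n : ℤ) - M))
        = ((A n).card : ℝ) / (Q : ℝ) ^ n := by
      rw [div_eq_mul_inv, ← zpow_natCast (Q : ℝ) n, ← zpow_neg]
      rw [mul_left_comm, ← zpow_add₀ (ne_of_gt hQ0)]
      congr 2
      ring
    rw [hcard, ← h3]
    exact mul_le_mul_of_nonneg_left h2 (by positivity)
  have hQM : Filter.Tendsto (fun n => (Q : ℝ) ^ M * t n) Filter.atTop (nhds 0) := by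
    have h := htend.const_mul ((Q : ℝ) ^ M)
    rwa [mul_zero] at h
  exact squeeze_zero (fun n => by positivity) hbound hQM
end

section
/- Let x_1 x_2 ⋯ be an infinite binary sequence satisfying Chaitin's randomness criterion: there exists a constant μ > 0 such that δ_2(x_1 x_2 ⋯ x_n) ≥ −μ for every n ≥ 1. Then there is no strictly increasing function F from positive integers to positive integers such that the set {(F(i), x_{F(i)}) : i ≥ 1} ⊆ ℕ × {0,1} is computably enumerable. -/
open scoped ENNReal

namespace RNC
open Nat.Partrec (Code)
open Nat.Partrec.Code
open Encodable

/-- dovetailed enumeration attempt at step `t` -/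
def E (c : Code) (t : ℕ) : Option (ℕ × Fin 2) :=
  (evaln t.unpair.2 c t.unpair.1).bind fun _ => (decode t.unpair.1 : Option (ℕ × Fin 2))

/-- list of distinct enumerated elements after `t` steps -/
def LL (c : Code) : ℕ → List (ℕ × Fin 2)
  | 0 => []
  | t+1 => match E c t with
    | some a => if a ∈ LL c t then LL c t else a :: LL c t
    | none => LL c t

def nmax (l : List (ℕ × Fin 2)) : ℕ := l.foldr (fun q r => max q.1 r) 0

def lzs (y : Str 2) : ℕ := y.foldr (fun b r => if b = 0 then r + 1 else 0) 0

def fromB (l : Str 2) : ℕ := l.foldr (fun b n => 2 * n + b.val) 0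

def toB : ℕ → List (Fin 2)
  | 0 => []
  | n+1 => ⟨(n+1) % 2, by omega⟩ :: toB ((n+1)/2)
  decreasing_by simp_wf; omega

def codeStr (m : ℕ) : Str 2 := List.replicate (toB m).length 0 ++ (1 : Fin 2) :: toB m

def mOf (y : Str 2) : ℕ :=
  fromB ((List.range (lzs y)).map fun i => y.getD (lzs y + 1 + i) 0)

def wOf (y : Str 2) : Str 2 :=
  (List.range (y.length - (2 * lzs y + 1))).map fun i => y.getD (2 * lzs y + 1 + i) 0

def lk (l : List (ℕ × Fin 2)) (p : ℕ) : Option (Fin 2) :=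
  l.foldr (fun q r => if q.1 = p then some q.2 else r) none

def idx (l : List (ℕ × Fin 2)) (j : ℕ) : ℕ :=
  ((List.range j).filterMap fun j' =>
    if (lk l (j' + 1)).isNone then some j' else none).length

def fill (l : List (ℕ × Fin 2)) (w : Str 2) : Str 2 :=
  (List.range (nmax l)).map fun j => (lk l (j + 1)).getD (w.getD (idx l j) 0)

def sP (c : Code) (m : ℕ) : Part ℕ :=
  Nat.rfind fun t => Part.some (decide (m ≤ (LL c t).length))

def Tf (c : Code) (y : Str 2) : Part (Str 2) :=
  (sP c (mOf y)).bind fun t =>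
    Part.ofOption
      (if y.length = 2 * lzs y + 1 + (nmax (LL c t) - mOf y) then
        some (fill (LL c t) (wOf y)) else none)

@[simp] lemma lzs_nil : lzs [] = 0 := rfl
@[simp] lemma lzs_cons (b : Fin 2) (l : Str 2) :
    lzs (b :: l) = if b = 0 then lzs l + 1 else 0 := rfl

lemma fin2_cases (b : Fin 2) : b = 0 ∨ b = 1 := by omega

lemma lzs_le_length (y : Str 2) : lzs y ≤ y.length := by
  induction y with
  | nil => simp
  | cons b l ih => rcases fin2_cases b with h | h <;> simp [h, Nat.succ_le_succ ih]

lemma lzs_append_of_lt {y : Str 2} (h : lzs y < y.length) (z : Str 2) :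
    lzs (y ++ z) = lzs y := by
  induction y with
  | nil => simp at h
  | cons b l ih =>
    rcases fin2_cases b with hb | hb
    · simp only [hb, lzs_cons, if_true, eq_self_iff_true, List.length_cons] at h ⊢
      rw [List.cons_append, lzs_cons, if_pos rfl, ih (by omega)]
    · simp [hb]

lemma lzs_replicate_append (ℓ : ℕ) (r : Str 2) :
    lzs (List.replicate ℓ 0 ++ (1 : Fin 2) :: r) = ℓ := by
  induction ℓ with
  | zero => simp
  | succ n ih => simp [List.replicate_succ, List.cons_append, lzs_cons, ih]

lemma fromB_toB (m : ℕ) : fromB (toB m) = m := by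
  induction m using Nat.strong_induction_on with
  | _ m ih =>
    match m with
    | 0 => simp [toB, fromB]
    | n+1 =>
      rw [toB]
      have h2 : (n+1)/2 < n+1 := by omega
      simp only [fromB, List.foldr_cons]
      have := ih ((n+1)/2) h2
      simp only [fromB] at this
      rw [this]
      omega

lemma length_toB_le (m : ℕ) : (toB m).length ≤ Nat.log 2 m + 1 := by
  induction m using Nat.strong_induction_on with
  | _ m ih =>
    match m with
    | 0 => simp [toB]
    | n+1 =>
      rw [toB]
      simp only [List.length_cons]
      have h2 : (n+1)/2 < n+1 := by omega
      have := ih ((n+1)/2) h2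
      rcases Nat.eq_zero_or_pos ((n+1)/2) with h | h
      · simp [h, toB]
      · have hlog : Nat.log 2 ((n+1)/2) + 1 = Nat.log 2 (n+1) := by
          rw [Nat.log_div_base 2 (n+1)]
          have : 1 ≤ Nat.log 2 (n+1) := by
            rw [Nat.one_le_iff_ne_zero, Ne, Nat.log_eq_zero_iff]
            omega
          omega
        omega

@[simp] lemma length_codeStr (m : ℕ) : (codeStr m).length = 2 * (toB m).length + 1 := by
  simp [codeStr]; omega

lemma map_range_getD (l : Str 2) : ((List.range l.length).map fun i => l.getD i 0) = l := by
  apply List.ext_getElem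
  · simp
  · intro n h1 h2
    simp only [List.getElem_map, List.getElem_range, List.getD_eq_getElem?_getD]
    rw [List.getElem?_eq_getElem (by simpa using h2)]
    rfl

lemma getD_append_left {l l' : Str 2} {i : ℕ} (h : i < l.length) (d : Fin 2) :
    (l ++ l').getD i d = l.getD i d := by
  rw [List.getD_eq_getElem?_getD, List.getD_eq_getElem?_getD, List.getElem?_append_left h]

lemma getD_append_right_add (l l' : Str 2) (i : ℕ) (d : Fin 2) :
    (l ++ l').getD (l.length + i) d = l'.getD i d := by
  rw [List.getD_eq_getElem?_getD, List.getD_eq_getElem?_getD,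
    List.getElem?_append_right (by omega), Nat.add_sub_cancel_left]

lemma lzs_codeStr_append (m : ℕ) (w : Str 2) :
    lzs (codeStr m ++ w) = (toB m).length := by
  rw [codeStr, List.append_assoc, List.cons_append, lzs_replicate_append]

lemma mOf_codeStr_append (m : ℕ) (w : Str 2) : mOf (codeStr m ++ w) = m := by
  set ℓ := (toB m).length with hℓ
  have hlz := lzs_codeStr_append m w
  rw [mOf, hlz]
  have hseg : ((List.range ℓ).map fun i => (codeStr m ++ w).getD (ℓ + 1 + i) 0) = toB m := by
    have : ∀ i < ℓ, (codeStr m ++ w).getD (ℓ + 1 + i) 0 = (toB m).getD i 0 := by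
      intro i hi
      have : codeStr m ++ w = (List.replicate ℓ 0 ++ [(1 : Fin 2)]) ++ (toB m ++ w) := by
        simp [codeStr, hℓ]
      rw [this]
      have hlen : (List.replicate ℓ (0 : Fin 2) ++ [(1 : Fin 2)]).length = ℓ + 1 := by simp
      have := getD_append_right_add (List.replicate ℓ (0:Fin 2) ++ [(1:Fin 2)]) (toB m ++ w) i 0
      rw [hlen] at this
      rw [this, getD_append_left hi]
    calc ((List.range ℓ).map fun i => (codeStr m ++ w).getD (ℓ + 1 + i) 0)
        = (List.range ℓ).map fun i => (toB m).getD i 0 := by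
          apply List.map_congr_left
          intro i hi
          exact this i (List.mem_range.mp hi)
      _ = toB m := by rw [hℓ]; exact map_range_getD (toB m)
  rw [hseg, fromB_toB]

lemma wOf_codeStr_append (m : ℕ) (w : Str 2) : wOf (codeStr m ++ w) = w := by
  set ℓ := (toB m).length with hℓ
  have hlz := lzs_codeStr_append m w
  have hlen : (codeStr m ++ w).length = 2 * ℓ + 1 + w.length := by simp [codeStr]; omega
  rw [wOf, hlz, hlen, Nat.add_sub_cancel_left]
  have : ∀ i < w.length, (codeStr m ++ w).getD (2 * ℓ + 1 + i) 0 = w.getD i 0 := by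
    intro i hi
    have h2 : (codeStr m).length = 2 * ℓ + 1 := by simp [codeStr]; omega
    have := getD_append_right_add (codeStr m) w i 0
    rw [h2] at this; exact this
  calc ((List.range w.length).map fun i => (codeStr m ++ w).getD (2 * ℓ + 1 + i) 0)
      = (List.range w.length).map fun i => w.getD i 0 := by
        apply List.map_congr_left; intro i hi; exact this i (List.mem_range.mp hi)
    _ = w := map_range_getD w


/-! ### LL lemmas -/

lemma LL_succ (c : Code) (t : ℕ) : LL c (t+1) = match E c t with
    | some a => if a ∈ LL c t then LL c t else a :: LL c t
    | none => LL c t := rfl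

lemma LL_succ_none {c : Code} {t : ℕ} (h : E c t = none) : LL c (t+1) = LL c t := by
  rw [LL_succ, h]

lemma LL_succ_some {c : Code} {t : ℕ} {a : ℕ × Fin 2} (h : E c t = some a) :
    LL c (t+1) = if a ∈ LL c t then LL c t else a :: LL c t := by
  rw [LL_succ, h]

lemma LL_subset_succ (c : Code) (t : ℕ) : LL c t ⊆ LL c (t+1) := by
  rcases h : E c t with _ | a
  · rw [LL_succ_none h]
    exact fun q hq => hq
  · rw [LL_succ_some h]
    by_cases hm : a ∈ LL c t <;> simp [hm, List.subset_cons_of_subset]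

lemma LL_mono (c : Code) {t t' : ℕ} (h : t ≤ t') : LL c t ⊆ LL c t' := by
  induction t' with
  | zero => cases Nat.le_zero.mp h; exact fun q hq => hq
  | succ t' ih =>
    rcases Nat.lt_or_ge t (t'+1) with h' | h'
    · exact fun q hq => LL_subset_succ c t' (ih (by omega) hq)
    · have : t = t' + 1 := by omega
      subst this; exact fun q hq => hq

lemma LL_nodup (c : Code) (t : ℕ) : (LL c t).Nodup := by
  induction t with
  | zero => exact List.nodup_nil
  | succ t ih =>
    rcases h : E c t with _ | a
    · rw [LL_succ_none h]; exact ih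
    · rw [LL_succ_some h]
      by_cases hm : a ∈ LL c t <;> simp [hm, ih]

lemma LL_subset_S {S : Set (ℕ × Fin 2)} {c : Code}
    (hc : ∀ t a, E c t = some a → a ∈ S) (t : ℕ) : ∀ q ∈ LL c t, q ∈ S := by
  induction t with
  | zero => intro q hq; simp only [LL] at hq; exact absurd hq List.not_mem_nil
  | succ t ih =>
    intro q hq
    rcases h : E c t with _ | a
    · rw [LL_succ_none h] at hq; exact ih q hq
    · rw [LL_succ_some h] at hq
      by_cases hm : a ∈ LL c t
      · rw [if_pos hm] at hq; exact ih q hq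
      · rw [if_neg hm] at hq
        rcases List.mem_cons.mp hq with rfl | hq
        · exact hc t q h
        · exact ih q hq

lemma mem_LL_of_E {c : Code} {t : ℕ} {a : ℕ × Fin 2} (h : E c t = some a) :
    a ∈ LL c (t+1) := by
  rw [LL_succ_some h]
  by_cases hm : a ∈ LL c t <;> simp [hm]

lemma LL_length_succ_le (c : Code) (t : ℕ) :
    (LL c (t+1)).length ≤ (LL c t).length + 1 := by
  rcases h : E c t with _ | a
  · rw [LL_succ_none h]; omega
  · rw [LL_succ_some h]
    by_cases hm : a ∈ LL c t <;> simp [hm]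

lemma LL_length_mono (c : Code) {t t' : ℕ} (h : t ≤ t') :
    (LL c t).length ≤ (LL c t').length :=
  (((LL_nodup c t).subperm (LL_mono c h))).length_le

lemma LL_length_unbounded {S : Set (ℕ × Fin 2)} {c : Code} (hinf : S.Infinite)
    (hc : ∀ t a, E c t = some a → a ∈ S) (hc2 : ∀ a ∈ S, ∃ t, E c t = some a)
    (m : ℕ) : ∃ t, m ≤ (LL c t).length := by
  obtain ⟨Fm, hFm, hcard⟩ := hinf.exists_subset_card_eq m
  classical
  set f : (ℕ × Fin 2) → ℕ := fun a => if h : ∃ t, a ∈ LL c t then Nat.find h else 0 with hf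
  refine ⟨Fm.sup f, ?_⟩
  have hmem : ∀ a ∈ Fm, a ∈ LL c (Fm.sup f) := by
    intro a ha
    obtain ⟨t, ht⟩ := hc2 a (hFm ha)
    have hex : ∃ t, a ∈ LL c t := ⟨t+1, mem_LL_of_E ht⟩
    have h1 : a ∈ LL c (f a) := by
      rw [hf]; simp only [dif_pos hex]; exact Nat.find_spec hex
    exact LL_mono c (Finset.le_sup ha) h1
  have hsub : Fm ⊆ (LL c (Fm.sup f)).toFinset := by
    intro a ha; rw [List.mem_toFinset]; exact hmem a ha
  calc m = Fm.card := hcard.symm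
    _ ≤ (LL c (Fm.sup f)).toFinset.card := Finset.card_le_card hsub
    _ ≤ (LL c (Fm.sup f)).length := (LL c _).toFinset_card_le

/-! ### nmax / lookup / counting -/

lemma le_nmax {l : List (ℕ × Fin 2)} {q : ℕ × Fin 2} (h : q ∈ l) : q.1 ≤ nmax l := by
  induction l with
  | nil => simp at h
  | cons p l ih =>
    rcases List.mem_cons.mp h with rfl | h
    · exact le_max_left _ _
    · exact le_trans (ih h) (le_max_right _ _)

@[simp] lemma lk_nil (p : ℕ) : lk [] p = none := rfl

lemma lk_cons (q : ℕ × Fin 2) (l : List (ℕ × Fin 2)) (p : ℕ) :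
    lk (q :: l) p = if q.1 = p then some q.2 else lk l p := rfl

lemma lookup_mem {l : List (ℕ × Fin 2)} {p : ℕ} {b : Fin 2}
    (h : lk l p = some b) : (p, b) ∈ l := by
  induction l with
  | nil => simp at h
  | cons q l ih =>
    rw [lk_cons] at h
    by_cases hq : q.1 = p
    · rw [if_pos hq] at h
      have : q = (p, b) := by
        obtain ⟨q1, q2⟩ := q
        simp at hq h
        simp [hq, h]
      rw [this] at *
      exact List.mem_cons_self
    · rw [if_neg hq] at h
      exact List.mem_cons_of_mem _ (ih h)

lemma lookup_isSome_iff_mem {l : List (ℕ × Fin 2)} {p : ℕ} :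
    (lk l p).isSome ↔ p ∈ l.map Prod.fst := by
  induction l with
  | nil => simp
  | cons q l ih =>
    rw [lk_cons]
    by_cases hq : q.1 = p
    · simp [hq]
    · rw [if_neg hq]
      simp only [List.map_cons, List.mem_cons]
      rw [ih]
      constructor
      · intro h; right; exact h
      · rintro (h | h)
        · exact absurd h.symm hq
        · exact h

lemma filterMap_guard {α : Type*} (p : α → Bool) (l : List α) :
    (l.filterMap fun a => if p a then some a else none) = l.filter p := by
  induction l with
  | nil => rfl
  | cons a l ih =>
    rw [List.filterMap_cons, List.filter_cons]
    by_cases h : p a <;> simp [h, ih]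

lemma idx_eq (l : List (ℕ × Fin 2)) (j : ℕ) :
    idx l j = ((List.range j).filter fun j' => (lk l (j'+1)).isNone).length := by
  rw [idx, filterMap_guard]

lemma count_isSome {l : List (ℕ × Fin 2)} {n : ℕ} (hnd : (l.map Prod.fst).Nodup)
    (hbound : ∀ q ∈ l, 1 ≤ q.1 ∧ q.1 ≤ n) :
    ((List.range n).filter fun j => (lk l (j+1)).isSome).length = l.length := by
  classical
  set P := l.map Prod.fst with hP
  set A := (((List.range n).map (· + 1)).filter fun p => decide (p ∈ P)) with hA
  have hAnodup : A.Nodup := by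
    apply List.Nodup.filter
    exact (List.nodup_range).map (fun a b h => by omega)
  have hmemA : ∀ p, p ∈ A ↔ p ∈ P := by
    intro p
    rw [hA, List.mem_filter]
    simp only [List.mem_map, List.mem_range, decide_eq_true_eq]
    constructor
    · rintro ⟨-, h⟩; exact h
    · intro h
      refine ⟨⟨p - 1, ?_, ?_⟩, h⟩
      · obtain ⟨q, hq, rfl⟩ := List.mem_map.mp h
        have := hbound q hq; omega
      · obtain ⟨q, hq, rfl⟩ := List.mem_map.mp h
        have := hbound q hq; omega
  have hlenA : A.length = P.length := by
    have h1 : A.toFinset = P.toFinset := by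
      ext p; rw [List.mem_toFinset, List.mem_toFinset, hmemA]
    calc A.length = A.toFinset.card := (List.toFinset_card_of_nodup hAnodup).symm
      _ = P.toFinset.card := by rw [h1]
      _ = P.length := List.toFinset_card_of_nodup hnd
  have hAB : A = ((List.range n).filter fun j => (lk l (j+1)).isSome).map (· + 1) := by
    rw [hA, List.filter_map]
    congr 1
    apply List.filter_congr
    intro j _
    show decide (j + 1 ∈ P) = (lk l (j + 1)).isSome
    rw [← Bool.coe_iff_coe]
    simp only [decide_eq_true_eq]
    rw [hP]
    exact lookup_isSome_iff_mem.symm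
  have := hlenA
  rw [hAB, List.length_map] at this
  rw [this, hP, List.length_map]

lemma count_isNone {l : List (ℕ × Fin 2)} {n : ℕ} (hnd : (l.map Prod.fst).Nodup)
    (hbound : ∀ q ∈ l, 1 ≤ q.1 ∧ q.1 ≤ n) :
    ((List.range n).filter fun j => (lk l (j+1)).isNone).length = n - l.length := by
  have hsplit := List.length_eq_length_filter_add (l := List.range n)
    (fun j => (lk l (j+1)).isSome)
  rw [List.length_range, count_isSome hnd hbound] at hsplit
  have : ((List.range n).filter fun j => !(lk l (j+1)).isSome) =
      ((List.range n).filter fun j => (lk l (j+1)).isNone) := by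
    apply List.filter_congr
    intro j _
    rcases h : lk l (j+1) <;> simp
  rw [this] at hsplit
  omega

lemma mlen_le_nmax {l : List (ℕ × Fin 2)} {n : ℕ} (hnd : (l.map Prod.fst).Nodup)
    (hbound : ∀ q ∈ l, 1 ≤ q.1 ∧ q.1 ≤ n) : l.length ≤ n := by
  have := count_isSome hnd hbound
  have h2 := (List.length_filter_le (fun j => (lk l (j+1)).isSome) (List.range n))
  rw [this] at h2
  simpa using h2

/-! ### fill correctness -/

lemma fill_spec {x : ℕ → Fin 2} {l : List (ℕ × Fin 2)}
    (hfun : ∀ q ∈ l, q.2 = x q.1) :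
    fill l (((List.range (nmax l)).filter fun j => (lk l (j+1)).isNone).map
      fun j => x (j+1)) = (List.range (nmax l)).map fun j => x (j+1) := by
  set n := nmax l with hn
  set w := (((List.range n).filter fun j => (lk l (j+1)).isNone).map
      fun j => x (j+1)) with hw
  rw [fill, ← hn]
  apply List.map_congr_left
  intro j hj
  have hjn : j < n := List.mem_range.mp hj
  rcases ho : lk l (j+1) with _ | b
  · -- none case
    simp only [Option.getD_none]
    have hrange : List.range n = List.range j ++ [j] ++
        (List.range (n - (j+1))).map ((j+1) + ·) := by
      rw [← List.range_succ, ← List.range_add]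
      congr 1; omega
    have hw2 : w = ((List.range j).filter fun j' => (lk l (j'+1)).isNone).map
        (fun j' => x (j'+1)) ++ (x (j+1)) ::
        (((List.range (n - (j+1))).map ((j+1) + ·)).filter
          fun j' => (lk l (j'+1)).isNone).map (fun j' => x (j'+1)) := by
      have hfj : ([j].filter fun j' => (lk l (j'+1)).isNone) = [j] := by
        simp [List.filter_cons, ho]
      rw [hw, hrange, List.filter_append, List.filter_append, hfj, List.map_append,
        List.map_append]
      simp
    have hidx : idx l j = (((List.range j).filter fun j' =>
        (lk l (j'+1)).isNone).map (fun j' => x (j'+1))).length := by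
      rw [idx_eq, List.length_map]
    have := getD_append_right_add
      (((List.range j).filter fun j' => (lk l (j'+1)).isNone).map (fun j' => x (j'+1)))
      ((x (j+1)) :: (((List.range (n - (j+1))).map ((j+1) + ·)).filter
          fun j' => (lk l (j'+1)).isNone).map (fun j' => x (j'+1))) 0 0
    rw [hw2, hidx]
    simpa using this

  · -- some case
    simp only [Option.getD_some]
    exact hfun _ (lookup_mem ho)


/-! ### sP and Tf evaluation -/

lemma LL_zero (c : Code) : LL c 0 = [] := rfl

lemma sP_eq {c : Code} {m : ℕ} (h : ∃ t, m ≤ (LL c t).length) :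
    sP c m = Part.some (Nat.find h) := by
  apply Part.eq_some_iff.mpr
  rw [sP]
  refine Nat.mem_rfind.mpr ?_
  constructor
  · simp [Nat.find_spec h]
  · intro t' ht'
    simp [Nat.find_min h ht']

lemma LL_length_at_find {c : Code} {m : ℕ} (hm : 1 ≤ m) (h : ∃ t, m ≤ (LL c t).length) :
    (LL c (Nat.find h)).length = m := by
  have hspec := Nat.find_spec h
  rcases hfind : Nat.find h with _ | t'
  · rw [hfind, LL_zero] at hspec
    rw [LL_zero]
    simp only [List.length_nil] at hspec ⊢
    omega
  · have hmin : ¬ m ≤ (LL c t').length := Nat.find_min h (by omega)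
    have hstep := LL_length_succ_le c t'
    rw [hfind] at hspec
    omega

lemma Tf_eq {c : Code} (y : Str 2) (h : ∃ t, (mOf y) ≤ (LL c t).length) :
    Tf c y = Part.ofOption
      (if y.length = 2 * lzs y + 1 + (nmax (LL c (Nat.find h)) - mOf y) then
        some (fill (LL c (Nat.find h)) (wOf y)) else none) := by
  rw [Tf, sP_eq h, Part.bind_some]

lemma Tf_dom_iff {c : Code} (hub : ∀ m, ∃ t, m ≤ (LL c t).length) (y : Str 2) :
    (Tf c y).Dom ↔
      y.length = 2 * lzs y + 1 + (nmax (LL c (Nat.find (hub (mOf y)))) - mOf y) := by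
  rw [Tf_eq y (hub (mOf y))]
  by_cases h : y.length = 2 * lzs y + 1 + (nmax (LL c (Nat.find (hub (mOf y)))) - mOf y) <;>
    simp [h]

lemma Tf_prefixFree {c : Code} (hub : ∀ m, ∃ t, m ≤ (LL c t).length) :
    PrefixFreeSet (PFun.Dom (Tf c)) := by
  intro y hy y' hy' hpre
  obtain ⟨z, rfl⟩ := hpre
  have hy1 : (Tf c y).Dom := hy
  have hy2 : (Tf c (y ++ z)).Dom := hy'
  rw [Tf_dom_iff hub] at hy1 hy2
  have hlz_lt : lzs y < y.length := by
    have := lzs_le_length y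
    omega
  have hlzeq : lzs (y ++ z) = lzs y := lzs_append_of_lt hlz_lt z
  have hmeq : mOf (y ++ z) = mOf y := by
    rw [mOf, mOf, hlzeq]
    congr 1
    apply List.map_congr_left
    intro i hi
    have hi' : i < lzs y := List.mem_range.mp hi
    exact getD_append_left (by omega) 0
  rw [hlzeq, hmeq] at hy2
  have hlen : (y ++ z).length = y.length := by omega
  rw [List.length_append] at hlen
  have : z = [] := List.length_eq_zero_iff.mp (by omega)
  rw [this, List.append_nil]

/-! ### the key program -/

section Key

variable {S : Set (ℕ × Fin 2)} {c : Code} {x : ℕ → Fin 2}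

lemma key (hE_mem : ∀ t a, E c t = some a → a ∈ S)
    (hS_fun : ∀ q ∈ S, q.2 = x q.1) (hS_pos : ∀ q ∈ S, 1 ≤ q.1)
    (hub : ∀ m, ∃ t, m ≤ (LL c t).length) {m : ℕ} (hm : 1 ≤ m) :
    ∃ n : ℕ, 1 ≤ n ∧ m ≤ n ∧ ∃ prog : Str 2,
      prog.length = 2 * (toB m).length + 1 + (n - m) ∧
      Tf c prog = Part.some ((List.range n).map fun j => x (j + 1)) := by
  classical
  set t := Nat.find (hub m) with ht
  set l := LL c t with hl
  set n := nmax l with hn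
  have hlen : l.length = m := LL_length_at_find hm (hub m)
  have hmemS : ∀ q ∈ l, q ∈ S := fun q hq => LL_subset_S hE_mem t q hq
  have hfst_nodup : (l.map Prod.fst).Nodup := by
    apply (LL_nodup c t).map_on
    intro q hq q' hq' hfst
    have h1 := hS_fun q (hmemS q hq)
    have h2 := hS_fun q' (hmemS q' hq')
    have : q.2 = q'.2 := by rw [h1, h2, hfst]
    exact Prod.ext hfst this
  have hbound : ∀ q ∈ l, 1 ≤ q.1 ∧ q.1 ≤ n := fun q hq =>
    ⟨hS_pos q (hmemS q hq), le_nmax hq⟩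
  have hmn : m ≤ n := by
    have := mlen_le_nmax hfst_nodup hbound
    omega
  have hn1 : 1 ≤ n := by
    have hlpos : l ≠ [] := by
      intro hnil
      rw [hnil] at hlen
      simp at hlen
      omega
    obtain ⟨q, hq⟩ := List.exists_mem_of_ne_nil l hlpos
    have := hbound q hq
    omega
  set w := (((List.range n).filter fun j => (lk l (j+1)).isNone).map
      fun j => x (j+1)) with hw
  have hwlen : w.length = n - m := by
    rw [hw, List.length_map, count_isNone hfst_nodup hbound, hlen]
  refine ⟨n, hn1, hmn, codeStr m ++ w, ?_, ?_⟩
  · rw [List.length_append, length_codeStr, hwlen]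
  · have hmOf : mOf (codeStr m ++ w) = m := mOf_codeStr_append m w
    have hwOf : wOf (codeStr m ++ w) = w := wOf_codeStr_append m w
    have hlz : lzs (codeStr m ++ w) = (toB m).length := lzs_codeStr_append m w
    rw [Tf_eq (codeStr m ++ w) (hub (mOf (codeStr m ++ w)))]
    have hfind_eq : Nat.find (hub (mOf (codeStr m ++ w))) = t := by
      rw [Nat.find_eq_iff]
      constructor
      · rw [hmOf, ht]
        exact Nat.find_spec (hub m)
      · intro k hk
        rw [hmOf]
        exact Nat.find_min (hub m) (by rw [ht] at hk; omega)
    have hcond : (codeStr m ++ w).length = 2 * lzs (codeStr m ++ w) + 1 +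
        (nmax (LL c (Nat.find (hub (mOf (codeStr m ++ w))))) - mOf (codeStr m ++ w)) := by
      rw [hfind_eq, hmOf, hlz, ← hl, ← hn, List.length_append, length_codeStr, hwlen]
    rw [if_pos hcond, hfind_eq, hwOf, ← hl]
    have hfill := fill_spec (l := l) (x := x) (fun q hq => hS_fun q (hmemS q hq))
    rw [← hn, ← hw] at hfill
    rw [hfill]
    rfl

end Key


/-! ### Computability -/

section Comp
open Primrec

lemma E_primrec (c : Code) : Primrec (E c) := by
  have h1 : Primrec fun t : ℕ => Nat.Partrec.Code.evaln t.unpair.2 c t.unpair.1 :=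
    Nat.Partrec.Code.primrec_evaln.comp
      (Primrec.pair (Primrec.pair (snd.comp Primrec.unpair) (const c))
        (fst.comp Primrec.unpair))
  exact option_bind h1
    ((Primrec.decode.comp (fst.comp (Primrec.unpair.comp fst))).to₂)

lemma mem_list_primrec : PrimrecRel (fun (a : ℕ × Fin 2) (l : List (ℕ × Fin 2)) => a ∈ l) :=
  (PrimrecRel.comp nat_lt (list_idxOf.comp fst snd) (list_length.comp snd)).of_eq
    fun _ => @List.idxOf_lt_length_iff _ instBEqOfDecidableEq _ _ _

lemma LL_primrec (c : Code) : Primrec (LL c) := by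
  have hg : Primrec₂ (fun (p : ℕ × List (ℕ × Fin 2)) (a : ℕ × Fin 2) =>
      if a ∈ p.2 then p.2 else a :: p.2) :=
    Primrec.ite (mem_list_primrec.comp snd (snd.comp fst))
      (snd.comp fst) (list_cons.comp snd (snd.comp fst))
  have hstep : Primrec fun p : ℕ × List (ℕ × Fin 2) =>
      (match E c p.1 with
        | some a => if a ∈ p.2 then p.2 else a :: p.2
        | none => p.2 : List (ℕ × Fin 2)) := by
    have := option_casesOn ((E_primrec c).comp (fst (β := List (ℕ × Fin 2)))) snd hg
    exact this.of_eq fun p => by rcases E c p.1 <;> rfl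
  have h : Primrec (Nat.rec (motive := fun _ => List (ℕ × Fin 2)) []
      (fun t' ih => match E c t' with
        | some a => if a ∈ ih then ih else a :: ih
        | none => ih)) := nat_rec₁ _ hstep.to₂
  exact h.of_eq fun t => by
    induction t with
    | zero => rfl
    | succ t ih => rw [LL_succ]; simp only []; rw [← ih]

lemma lzs_primrec : Primrec lzs := by
  have := list_foldr (Primrec.id (α := Str 2)) (const 0)
    (Primrec.ite (PrimrecRel.comp Primrec.eq (fst.comp snd) (const (0 : Fin 2)))
      (succ.comp (snd.comp snd)) (const 0)).to₂
  exact this.of_eq fun l => rfl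

lemma fromB_primrec : Primrec fromB := by
  have := list_foldr (Primrec.id (α := Str 2)) (const 0)
    (nat_add.comp (nat_mul.comp (const 2) (snd.comp snd))
      (fin_val.comp (fst.comp snd))).to₂
  exact this.of_eq fun l => rfl

lemma nmax_primrec : Primrec nmax := by
  have := list_foldr (Primrec.id (α := List (ℕ × Fin 2))) (const 0)
    (nat_max.comp (fst.comp (fst.comp snd)) (snd.comp snd)).to₂
  exact this.of_eq fun l => rfl

lemma mOf_primrec : Primrec mOf := by
  have hseg : Primrec fun y : Str 2 =>
      (List.range (lzs y)).map fun i => y.getD (lzs y + 1 + i) 0 :=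
    list_map (list_range.comp lzs_primrec)
      (((list_getD (0 : Fin 2)).comp fst
        (nat_add.comp (nat_add.comp (lzs_primrec.comp fst) (const 1)) snd)).to₂)
  exact fromB_primrec.comp hseg

lemma wOf_primrec : Primrec wOf :=
  list_map
    (list_range.comp (nat_sub.comp list_length
      (nat_add.comp (nat_mul.comp (const 2) lzs_primrec) (const 1))))
    (((list_getD (0 : Fin 2)).comp fst
      (nat_add.comp
        (nat_add.comp (nat_mul.comp (const 2) (lzs_primrec.comp fst)) (const 1))
        snd)).to₂)

lemma lk_primrec : Primrec₂ lk := by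
  have := list_foldr (fst (β := ℕ) (α := List (ℕ × Fin 2)))
    (const (none : Option (Fin 2)))
    (Primrec.ite
      (PrimrecRel.comp Primrec.eq (fst.comp (fst.comp snd)) (snd.comp fst))
      (option_some.comp (snd.comp (fst.comp snd)))
      (snd.comp snd)).to₂
  exact this.to₂.of_eq fun l p => rfl

lemma isNone_primrec {α : Type} [Primcodable α] : Primrec (@Option.isNone α) := by
  have : Primrec fun o : Option α => !o.isSome :=
    Primrec.cond option_isSome (const false) (const true)
  exact this.of_eq fun o => by cases o <;> rfl

lemma idx_primrec : Primrec₂ idx := by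
  have hfm : Primrec fun q : List (ℕ × Fin 2) × ℕ =>
      (List.range q.2).filterMap fun j' =>
        if (lk q.1 (j' + 1)).isNone then some j' else none :=
    listFilterMap (list_range.comp snd)
      ((Primrec.ite
        (PrimrecPred.comp (PrimrecRel.comp Primrec.eq Primrec.id (const true))
          (isNone_primrec.comp (lk_primrec.comp (fst.comp fst)
            (succ.comp snd))))
        (option_some.comp snd) (const none)).to₂)
  exact (list_length.comp hfm).to₂.of_eq fun l j => by
    simp only [idx]

lemma fill_primrec : Primrec₂ fill := by
  have : Primrec fun q : List (ℕ × Fin 2) × Str 2 =>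
      (List.range (nmax q.1)).map fun j =>
        (lk q.1 (j + 1)).getD (q.2.getD (idx q.1 j) 0) :=
    list_map (list_range.comp (nmax_primrec.comp fst))
      ((option_getD.comp
        (lk_primrec.comp (fst.comp fst) (succ.comp snd))
        ((list_getD (0 : Fin 2)).comp (snd.comp fst)
          (idx_primrec.comp (fst.comp fst) snd))).to₂)
  exact this.to₂

lemma Tf_partrec (c : Code) : Partrec (Tf c) := by
  have houter : Partrec fun y : Str 2 => sP c (mOf y) := by
    apply Partrec.rfind (p := fun (y : Str 2) (t : ℕ) =>
      (Part.some (decide (mOf y ≤ (LL c t).length)) : Part Bool))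
    exact Computable₂.partrec₂
      (Primrec.to_comp (PrimrecPred.decide (PrimrecRel.comp nat_le (mOf_primrec.comp fst)
        (list_length.comp ((LL_primrec c).comp snd)))))
  have hinner : Computable fun q : Str 2 × ℕ =>
      (if q.1.length = 2 * lzs q.1 + 1 + (nmax (LL c q.2) - mOf q.1) then
        some (fill (LL c q.2) (wOf q.1)) else none : Option (Str 2)) := by
    apply Primrec.to_comp
    exact Primrec.ite
      (PrimrecRel.comp Primrec.eq (list_length.comp fst)
        (nat_add.comp
          (nat_add.comp (nat_mul.comp (const 2) (lzs_primrec.comp fst)) (const 1))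
          (nat_sub.comp (nmax_primrec.comp ((LL_primrec c).comp snd))
            (mOf_primrec.comp fst))))
      (option_some.comp (fill_primrec.comp ((LL_primrec c).comp snd)
        (wOf_primrec.comp fst)))
      (const none)
  exact houter.bind ((Computable.ofOption hinner).to₂)

end Comp


/-! ### Soundness/completeness of E w.r.t. a code for g -/

section Sound
open Encodable

variable {g : (ℕ × Fin 2) →. Unit} {c : Code}

lemma E_sound
    (hc : eval c = fun n => Part.bind ((decode (α := ℕ × Fin 2) n : Option (ℕ × Fin 2)) : Part (ℕ × Fin 2)) fun a => (g a).map encode)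
    (t : ℕ) (a : ℕ × Fin 2) (h : E c t = some a) : (g a).Dom := by
  rw [E] at h
  rcases hev : Nat.Partrec.Code.evaln t.unpair.2 c t.unpair.1 with _ | v
  · rw [hev, Option.bind_none] at h; exact absurd h (by simp)
  · rw [hev, Option.bind_some] at h
    have hv : v ∈ eval c t.unpair.1 :=
      Nat.Partrec.Code.evaln_sound (by rw [hev]; exact Option.mem_def.mpr rfl)
    rw [hc] at hv
    obtain ⟨a', ha', hv'⟩ := Part.mem_bind_iff.mp hv
    rw [Part.mem_coe] at ha'
    have : a' = a := by
      rw [Option.mem_def] at ha'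
      rw [ha'] at h
      exact Option.some_injective _ h
    subst this
    obtain ⟨u, hu, -⟩ := (Part.mem_map_iff _).mp hv'
    exact Part.dom_iff_mem.mpr ⟨u, hu⟩

lemma E_complete
    (hc : eval c = fun n => Part.bind ((decode (α := ℕ × Fin 2) n : Option (ℕ × Fin 2)) : Part (ℕ × Fin 2)) fun a => (g a).map encode)
    (a : ℕ × Fin 2) (h : (g a).Dom) : ∃ t, E c t = some a := by
  obtain ⟨u, hu⟩ := Part.dom_iff_mem.mp h
  have hv : encode u ∈ eval c (encode a) := by
    rw [hc]
    apply Part.mem_bind_iff.mpr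
    refine ⟨a, ?_, ?_⟩
    · rw [Part.mem_coe, Option.mem_def, encodek]
    · exact (Part.mem_map_iff _).mpr ⟨u, hu, rfl⟩
  obtain ⟨k, hk⟩ := Nat.Partrec.Code.evaln_complete.mp hv
  refine ⟨Nat.pair (encode a) k, ?_⟩
  rw [E, Nat.unpair_pair]
  rw [Option.mem_def] at hk
  rw [hk, Option.bind_some, encodek]

end Sound

lemma three_mul_lt_two_pow {j : ℕ} (h : 5 ≤ j) : 3 * j < 2 ^ j := by
  induction j, h using Nat.le_induction with
  | base => norm_num
  | succ j hj ih =>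
    have h2 : 3 ≤ 2 ^ j := le_trans (by omega) (le_of_lt ih)
    rw [pow_succ]
    omega

end RNC

/-- If an infinite binary sequence `x₁x₂⋯` satisfies Chaitin's randomness criterion
(`δ₂(x₁⋯x_n) ≥ −μ` for all `n ≥ 1`, for some constant `μ > 0`), then there is no strictly
increasing function `F` on positive integers such that `{(F(i), x_{F(i)}) : i ≥ 1}` is c.e. -/
theorem random_no_ce_scattered_digits (U2 : SDMachine 2) (hU2 : IsUniversal U2)
    (x : ℕ → Fin 2)
    (hrand : ∃ μ : ℕ, 0 < μ ∧ ∀ n, 1 ≤ n →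
      -(μ : ℤ) ≤ deltaC U2 ((List.range n).map fun j => x (j + 1))) :
    ¬ ∃ F : ℕ → ℕ, (∀ i, 1 ≤ i → 1 ≤ F i) ∧ (∀ i j, 1 ≤ i → i < j → F i < F j) ∧
        CEset {p : ℕ × Fin 2 | ∃ i, 1 ≤ i ∧ p.1 = F i ∧ p.2 = x (F i)} := by
  rintro ⟨F, hF1, hFmono, g, hgpr, hgdom⟩
  obtain ⟨μ, hμ, hrand⟩ := hrand
  have hnat : Nat.Partrec fun n =>
      Part.bind ((Encodable.decode (α := ℕ × Fin 2) n : Option (ℕ × Fin 2)) : Part (ℕ × Fin 2))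
        fun a => (g a).map Encodable.encode := hgpr
  obtain ⟨c, hc⟩ := Nat.Partrec.Code.exists_code.mp hnat
  set S : Set (ℕ × Fin 2) := {p : ℕ × Fin 2 | ∃ i, 1 ≤ i ∧ p.1 = F i ∧ p.2 = x (F i)}
    with hSdef
  have hgS : ∀ a, (g a).Dom ↔ a ∈ S := by
    intro a
    rw [← hgdom]
    exact Iff.rfl
  have hE_mem : ∀ t a, RNC.E c t = some a → a ∈ S := fun t a h =>
    (hgS a).mp (RNC.E_sound hc t a h)
  have hE_comp : ∀ a ∈ S, ∃ t, RNC.E c t = some a := fun a ha =>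
    RNC.E_complete hc a ((hgS a).mpr ha)
  have hS_fun : ∀ q ∈ S, q.2 = x q.1 := by
    rintro q ⟨i, hi, h1, h2⟩
    rw [h2, h1]
  have hS_pos : ∀ q ∈ S, 1 ≤ q.1 := by
    rintro q ⟨i, hi, h1, -⟩
    rw [h1]
    exact hF1 i hi
  have hFinj : ∀ i k, 1 ≤ i → 1 ≤ k → F i = F k → i = k := by
    intro i k hi hk hik
    rcases lt_trichotomy i k with h | h | h
    · exact absurd hik (ne_of_lt (hFmono i k hi h))
    · exact h
    · exact absurd hik.symm (ne_of_lt (hFmono k i hk h))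
  have hS_inf : S.Infinite := by
    apply Set.infinite_of_injective_forall_mem
      (f := fun k : ℕ => ((F (k+1), x (F (k+1))) : ℕ × Fin 2))
    · intro a b hab
      have h1 := congrArg Prod.fst hab
      simp only at h1
      have := hFinj (a+1) (b+1) (by omega) (by omega) h1
      omega
    · intro k
      exact ⟨k+1, by omega, rfl, rfl⟩
  have hub : ∀ m, ∃ t, m ≤ (RNC.LL c t).length := fun m =>
    RNC.LL_length_unbounded hS_inf hE_mem hE_comp m
  let T : SDMachine 2 := ⟨RNC.Tf c, RNC.Tf_partrec c, RNC.Tf_prefixFree hub⟩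
  obtain ⟨ε, hε, hU⟩ := hU2 T
  set j := μ + ε + 4 with hjdef
  set M := 2 ^ j with hM
  have hm1 : 1 ≤ M := hM ▸ Nat.one_le_two_pow
  obtain ⟨n, hn1, hmn, prog, hproglen, hprogeval⟩ :=
    RNC.key hE_mem hS_fun hS_pos hub hm1
  have h1 : Hm T ((List.range n).map fun k => x (k + 1)) ≤ (prog.length : ℕ∞) := by
    apply sInf_le
    refine ⟨prog, ?_, rfl⟩
    show ((List.range n).map fun k => x (k + 1)) ∈ RNC.Tf c prog
    rw [hprogeval]
    exact Part.mem_some _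
  have h2 : Hm U2 ((List.range n).map fun k => x (k + 1)) ≤
      ((prog.length + ε : ℕ) : ℕ∞) := by
    refine le_trans (hU _) ?_
    rw [Nat.cast_add]
    exact add_le_add_left h1 _
  have h3 : (Hm U2 ((List.range n).map fun k => x (k + 1))).toNat ≤ prog.length + ε :=
    ENat.toNat_le_of_le_coe h2
  have h4 := hrand n hn1
  rw [deltaC] at h4
  simp only [List.length_map, List.length_range] at h4
  have hlog : (RNC.toB M).length ≤ j + 1 := by
    have h5 := RNC.length_toB_le M
    rw [hM, Nat.log_pow one_lt_two] at h5
    rw [hM]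
    exact h5
  have hjge : 5 ≤ j := by omega
  have hpow : 3 * j < M := hM ▸ RNC.three_mul_lt_two_pow hjge
  omega
end
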